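/- arXiv:2005.04282 — 9 statements merged into one kernel-verified Lean document; each statement's English description precedes it below -/
import Mathlib

section
/- Let S be a sunflower with at least r+1 petals contained in an intersecting r-uniform hypergraph G with minimum positive co-degree at least k. Then the core Y of S satisfies |Y| ≥ k. -/
/-- A sunflower with at least r+1 petals inside an intersecting r-uniform hypergraph G
with minimum positive co-degree at least k has core of size at least k. -/
theorem stmt_1 {V : Type*} [Fintype V] [DecidableEq V] (r k : ℕ)
    (G : Finset (Finset V))
    (hunif : ∀ h ∈ G, h.card = r)
    (hint : ∀ a ∈ G, ∀ b ∈ G, (a ∩ b).Nonempty)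
    (hcodeg : ∀ S : Finset V, S.card = r - 1 → (∃ h ∈ G, S ⊆ h) →
      k ≤ (G.filter fun h => S ⊆ h).card)
    (S : Finset (Finset V)) (Y : Finset V)
    (hSG : S ⊆ G) (hS : r + 1 ≤ S.card)
    (hcore : ∀ a ∈ S, ∀ b ∈ S, a ≠ b → a ∩ b = Y) :
    k ≤ Y.card := by
  classical
  obtain ⟨a, ha⟩ := Finset.card_pos.mp (by omega : 0 < S.card)
  have haG := hSG ha
  rcases Nat.eq_zero_or_pos r with hr0 | hr
  · have h1 := hint a haG a haG
    have h2 := hunif a haG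
    rw [hr0, Finset.card_eq_zero] at h2
    simp [h2] at h1
  obtain ⟨v, hv⟩ : a.Nonempty := Finset.card_pos.mp (by rw [hunif a haG]; omega)
  haveI : Nonempty V := ⟨v⟩
  -- every edge of G meets Y
  have hmeet : ∀ g ∈ G, (g ∩ Y).Nonempty := by
    intro g hg
    by_contra hcon
    set f : Finset V → V := fun s =>
      if h : (s ∩ g).Nonempty then h.choose else Classical.arbitrary V with hf
    have hfm : ∀ s ∈ S, f s ∈ s ∩ g := by
      intro s hs
      have h := hint s (hSG hs) g hg
      simp only [hf, dif_pos h]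
      exact h.choose_spec
    have hmaps : ∀ s ∈ S, f s ∈ g := fun s hs => (Finset.mem_inter.mp (hfm s hs)).2
    have hlt : g.card < S.card := by rw [hunif g hg]; omega
    obtain ⟨s, hs, s', hs', hne, heq⟩ :=
      Finset.exists_ne_map_eq_of_card_lt_of_maps_to hlt hmaps
    have h1 : f s ∈ s ∩ s' := Finset.mem_inter.mpr
      ⟨(Finset.mem_inter.mp (hfm s hs)).1, heq ▸ (Finset.mem_inter.mp (hfm s' hs')).1⟩
    rw [hcore s hs s' hs' hne] at h1
    exact hcon ⟨f s, Finset.mem_inter.mpr ⟨hmaps s hs, h1⟩⟩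
  -- pick an edge minimizing intersection with Y
  obtain ⟨g₀, hg₀, hmin⟩ := Finset.exists_min_image G (fun g => (g ∩ Y).card) ⟨a, haG⟩
  set m := (g₀ ∩ Y).card with hm
  have hm1 : 1 ≤ m := Finset.card_pos.mpr (hmeet g₀ hg₀)
  have hmr : m ≤ r := by
    rw [hm, ← hunif g₀ hg₀]; exact Finset.card_le_card Finset.inter_subset_left
  obtain ⟨A, hA, hAcard⟩ := Finset.exists_subset_card_eq (by omega : m - 1 ≤ (g₀ ∩ Y).card)
  set T := (g₀ \ Y) ∪ A with hT
  have hAY : A ⊆ Y := hA.trans Finset.inter_subset_right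
  have hTg : T ⊆ g₀ := Finset.union_subset Finset.sdiff_subset (hA.trans Finset.inter_subset_left)
  have hTY : T ∩ Y = A := by
    rw [hT, Finset.union_inter_distrib_right, Finset.sdiff_inter_self, Finset.empty_union]
    exact Finset.inter_eq_left.mpr hAY
  have hsdc : (g₀ \ Y).card + m = r := by
    have h1 := Finset.card_sdiff_add_card_inter g₀ Y
    rw [hunif g₀ hg₀] at h1
    omega
  have hTcard : T.card = r - 1 := by
    rw [hT, Finset.card_union_of_disjoint
      (Finset.disjoint_left.mpr fun x hx hxA => (Finset.mem_sdiff.mp hx).2 (hAY hxA)), hAcard]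
    omega
  have hk := hcodeg T hTcard ⟨g₀, hg₀, hTg⟩
  set F : Finset V → V := fun h =>
    if hh : (h \ T).Nonempty then hh.choose else Classical.arbitrary V with hF
  have key : ∀ h ∈ G.filter (fun h => T ⊆ h), F h ∈ Y \ A ∧ h = T ∪ {F h} := by
    intro h hh
    rw [Finset.mem_filter] at hh
    obtain ⟨hhG, hTh⟩ := hh
    have hcardh : h.card = r := hunif h hhG
    have hdcard : (h \ T).card = 1 := by
      rw [Finset.card_sdiff_of_subset hTh, hcardh, hTcard]; omega
    have hne : (h \ T).Nonempty := by
      rw [← Finset.card_pos, hdcard]; omega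
    have hFh : F h ∈ h \ T := by
      simp only [hF, dif_pos hne]; exact hne.choose_spec
    have hsingle : h \ T = {F h} := by
      obtain ⟨y, hy⟩ := Finset.card_eq_one.mp hdcard
      rw [hy] at hFh ⊢
      rw [Finset.mem_singleton] at hFh
      rw [hFh]
    have heqh : h = T ∪ {F h} := by
      rw [← hsingle, Finset.union_sdiff_of_subset hTh]
    have hFhY : F h ∈ Y := by
      by_contra hFY
      have hhYA : h ∩ Y = A := by
        rw [heqh, Finset.union_inter_distrib_right, hTY,
          Finset.singleton_inter_of_notMem hFY, Finset.union_empty]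
      have := hmin h hhG
      rw [hhYA, hAcard] at this
      omega
    refine ⟨Finset.mem_sdiff.mpr ⟨hFhY, fun hFA => ?_⟩, heqh⟩
    exact (Finset.mem_sdiff.mp hFh).2 (Finset.mem_union_right _ hFA)
  have hinj : Set.InjOn F (G.filter (fun h => T ⊆ h)) := by
    intro x hx y hy hxy
    rw [(key x (Finset.mem_coe.mp hx)).2, (key y (Finset.mem_coe.mp hy)).2, hxy]
  have hle := Finset.card_le_card_of_injOn F (fun h hh => (key h hh).1) hinj
  have hYA : (Y \ A).card = Y.card - (m - 1) := by
    rw [Finset.card_sdiff_of_subset hAY, hAcard]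
  omega
end

section
/- If a sunflower with core Y has at least r+1 petals inside an intersecting r-uniform hypergraph G, then Y is a transversal of G, i.e., every hyperedge of G intersects Y. -/
/-- If a sunflower with core Y has at least r+1 petals inside an intersecting r-uniform
hypergraph G, then Y is a transversal of G. -/
theorem stmt_2 {V : Type*} [Fintype V] [DecidableEq V] (r : ℕ)
    (G : Finset (Finset V))
    (hunif : ∀ h ∈ G, h.card = r)
    (hint : ∀ a ∈ G, ∀ b ∈ G, (a ∩ b).Nonempty)
    (S : Finset (Finset V)) (Y : Finset V)
    (hSG : S ⊆ G) (hS : r + 1 ≤ S.card)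
    (hcore : ∀ a ∈ S, ∀ b ∈ S, a ≠ b → a ∩ b = Y) :
    ∀ h ∈ G, (h ∩ Y).Nonempty := by
  intro h hG
  by_contra hempty
  rw [Finset.not_nonempty_iff_eq_empty] at hempty
  -- each petal a ∈ S meets h; pick a witness
  have hw : ∀ a ∈ S, ∃ x, x ∈ h ∩ a := by
    intro a ha
    exact hint h hG a (hSG ha)
  choose f hf using hw
  have hinj : ∀ (a : Finset V) (ha : a ∈ S) (b : Finset V) (hb : b ∈ S), f a ha = f b hb → a = b := by
    intro a ha b hb hfeq
    by_contra hne
    have h1 := hf a ha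
    have h2 := hf b hb
    rw [hfeq] at h1
    rw [Finset.mem_inter] at h1 h2
    have : f b hb ∈ a ∩ b := Finset.mem_inter.mpr ⟨h1.2, h2.2⟩
    rw [hcore a ha b hb hne] at this
    have : f b hb ∈ h ∩ Y := Finset.mem_inter.mpr ⟨h2.1, this⟩
    simp [hempty] at this
  obtain ⟨v, -⟩ := hint h hG h hG
  haveI : Nonempty V := ⟨v⟩
  have hcard : S.card ≤ h.card := by
    apply Finset.card_le_card_of_injOn (fun a => if ha : a ∈ S then f a ha else Classical.arbitrary _)
    · intro a ha
      simp only [Finset.mem_coe] at ha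
      simp only [ha, dif_pos]
      exact (Finset.mem_inter.mp (hf a ha)).1
    · intro a ha b hb heq
      simp only [Finset.mem_coe] at ha hb
      simp only [ha, hb, dif_pos] at heq
      exact hinj a ha b hb heq
  rw [hunif h hG] at hcard
  omega
end

section
/- Let n ≥ r ≥ t and let H be an intersecting r-uniform hypergraph on n vertices with transversal number τ(H) ≥ t. Then the number of hyperedges of H is at most r^t · C(n-t, r-t). -/
/-- An intersecting r-uniform n-vertex hypergraph with transversal number at least t
(n ≥ r ≥ t) has at most r^t · C(n-t, r-t) hyperedges. -/
theorem stmt_3 {V : Type*} [Fintype V] [DecidableEq V] (n r t : ℕ)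
    (hn : Fintype.card V = n) (hnr : r ≤ n) (hrt : t ≤ r)
    (H : Finset (Finset V))
    (hunif : ∀ h ∈ H, h.card = r)
    (hint : ∀ a ∈ H, ∀ b ∈ H, (a ∩ b).Nonempty)
    (htau : ∀ T : Finset V, (∀ h ∈ H, (h ∩ T).Nonempty) → t ≤ T.card) :
    H.card ≤ r ^ t * (n - t).choose (r - t) := by
  have hD : ∀ S : Finset V, S.card < t → ∃ h ∈ H, Disjoint h S := by
    intro S hS
    by_contra hc
    push_neg at hc
    have h1 : t ≤ S.card := htau S (fun h hh => by
      have := hc h hh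
      rwa [Finset.not_disjoint_iff_nonempty_inter] at this)
    omega
  have claim : ∀ k : ℕ, ∀ S : Finset V, S.card + k = t →
      (H.filter (fun h => S ⊆ h)).card ≤ r ^ k * (n - t).choose (r - t) := by
    intro k
    induction k with
    | zero =>
      intro S hS
      simp only [Nat.add_zero] at hS
      rw [pow_zero, one_mul]
      have hle : (H.filter (fun h => S ⊆ h)).card ≤
          ((Finset.univ \ S).powersetCard (r - t)).card := by
        apply Finset.card_le_card_of_injOn (fun h => h \ S)
        · intro h hh
          simp only [Finset.coe_filter, Set.mem_setOf_eq, Finset.mem_filter, Finset.mem_coe] at hh ⊢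
          rw [Finset.mem_powersetCard]
          constructor
          · exact Finset.sdiff_subset_sdiff (Finset.subset_univ _) le_rfl
          · rw [Finset.card_sdiff_of_subset hh.2, hunif h hh.1, hS]
        · intro a ha b hb hab
          simp only [Finset.coe_filter, Set.mem_setOf_eq] at ha hb
          have h2 : a \ S ∪ S = b \ S ∪ S := by
            simp only at hab; rw [hab]
          rwa [Finset.sdiff_union_of_subset ha.2, Finset.sdiff_union_of_subset hb.2] at h2
      rwa [Finset.card_powersetCard, Finset.card_sdiff_of_subset (Finset.subset_univ S),
        Finset.card_univ, hn, hS] at hle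
    | succ k ih =>
      intro S hS
      obtain ⟨h₀, hh₀, hdisj⟩ := hD S (by omega)
      have hsub : H.filter (fun h => S ⊆ h) ⊆
          h₀.biUnion (fun v => H.filter (fun h => insert v S ⊆ h)) := by
        intro h hh
        simp only [Finset.mem_filter] at hh
        obtain ⟨v, hv⟩ := hint h hh.1 h₀ hh₀
        rw [Finset.mem_inter] at hv
        rw [Finset.mem_biUnion]
        exact ⟨v, hv.2, Finset.mem_filter.2 ⟨hh.1, Finset.insert_subset hv.1 hh.2⟩⟩
      calc (H.filter (fun h => S ⊆ h)).card
          ≤ ∑ v ∈ h₀, (H.filter (fun h => insert v S ⊆ h)).card :=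
            le_trans (Finset.card_le_card hsub) Finset.card_biUnion_le
        _ ≤ ∑ v ∈ h₀, r ^ k * (n - t).choose (r - t) := by
            apply Finset.sum_le_sum
            intro v hv
            apply ih
            rw [Finset.card_insert_of_notMem (Finset.disjoint_left.1 hdisj hv)]
            omega
        _ = r ^ (k + 1) * (n - t).choose (r - t) := by
            rw [Finset.sum_const, hunif h₀ hh₀, smul_eq_mul, pow_succ]
            ring
  have hmain := claim t ∅ (by simp)
  have hfull : H.filter (fun h => (∅ : Finset V) ⊆ h) = H :=
    Finset.filter_true_of_mem (fun h _ => Finset.empty_subset h)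
  rwa [hfull] at hmain
end

section
/- Let H be an intersecting r-uniform hypergraph with transversal number τ(H) ≥ t, where r ≥ t. Then there exists a t-uniform hypergraph T on the same vertex set with at most r^t hyperedges such that every hyperedge of H contains some hyperedge of T. -/
lemma stmt_4_aux {V : Type*} [Fintype V] [DecidableEq V] (r : ℕ)
    (H : Finset (Finset V))
    (hunif : ∀ h ∈ H, h.card = r)
    (hint : ∀ a ∈ H, ∀ b ∈ H, (a ∩ b).Nonempty) :
    ∀ t : ℕ, (∀ T : Finset V, (∀ h ∈ H, (h ∩ T).Nonempty) → t ≤ T.card) →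
    ∃ T : Finset (Finset V), T.card ≤ r ^ t ∧ (∀ s ∈ T, s.card = t) ∧
      ∀ h ∈ H, ∃ s ∈ T, s ⊆ h := by
  intro t
  induction t with
  | zero =>
    intro _
    exact ⟨{∅}, by simp, by simp, fun h _ => ⟨∅, by simp⟩⟩
  | succ t ih =>
    intro htau
    obtain ⟨T, hTc, hTu, hTcov⟩ := ih (fun S hS => le_trans (Nat.le_succ t) (htau S hS))
    have hne : ∀ s ∈ T, ∃ e ∈ H, e ∩ s = ∅ := by
      intro s hs
      by_contra hcon
      push_neg at hcon
      have := htau s (fun h hh => hcon h hh)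
      rw [hTu s hs] at this
      omega
    choose e he hes using hne
    refine ⟨T.attach.biUnion (fun s => (e s.1 s.2).image (fun v => insert v s.1)), ?_, ?_, ?_⟩
    · calc (T.attach.biUnion _).card
          ≤ ∑ s ∈ T.attach, ((e s.1 s.2).image (fun v => insert v s.1)).card :=
            Finset.card_biUnion_le
        _ ≤ ∑ s ∈ T.attach, r := by
            refine Finset.sum_le_sum fun s _ => ?_
            calc ((e s.1 s.2).image _).card ≤ (e s.1 s.2).card := Finset.card_image_le
              _ = r := hunif _ (he s.1 s.2)
        _ = T.card * r := by simp [Finset.sum_const, mul_comm]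
        _ ≤ r ^ t * r := Nat.mul_le_mul_right r hTc
        _ = r ^ (t + 1) := (pow_succ r t).symm
    · intro s' hs'
      simp only [Finset.mem_biUnion, Finset.mem_attach, Finset.mem_image, true_and] at hs'
      obtain ⟨s, v, hv, rfl⟩ := hs'
      have hvs : v ∉ (s : Finset V) := by
        intro hvs
        have : v ∈ e s.1 s.2 ∩ s.1 := Finset.mem_inter.2 ⟨hv, hvs⟩
        rw [hes s.1 s.2] at this
        exact absurd this (Finset.notMem_empty v)
      rw [Finset.card_insert_of_notMem hvs, hTu s.1 s.2]
    · intro h hh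
      obtain ⟨s, hs, hsub⟩ := hTcov h hh
      obtain ⟨v, hv⟩ := hint (e s hs) (he s hs) h hh
      rw [Finset.mem_inter] at hv
      refine ⟨insert v s, ?_, ?_⟩
      · simp only [Finset.mem_biUnion, Finset.mem_attach, Finset.mem_image, true_and]
        exact ⟨⟨s, hs⟩, v, hv.1, rfl⟩
      · exact Finset.insert_subset hv.2 hsub

/-- If H is intersecting r-uniform with transversal number at least t (r ≥ t), then
there is a t-uniform hypergraph T with at most r^t hyperedges such that every
hyperedge of H contains a hyperedge of T. -/
theorem stmt_4 {V : Type*} [Fintype V] [DecidableEq V] (r t : ℕ) (hrt : t ≤ r)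
    (H : Finset (Finset V))
    (hunif : ∀ h ∈ H, h.card = r)
    (hint : ∀ a ∈ H, ∀ b ∈ H, (a ∩ b).Nonempty)
    (htau : ∀ T : Finset V, (∀ h ∈ H, (h ∩ T).Nonempty) → t ≤ T.card) :
    ∃ T : Finset (Finset V), T.card ≤ r ^ t ∧ (∀ s ∈ T, s.card = t) ∧
      ∀ h ∈ H, ∃ s ∈ T, s ⊆ h :=
  stmt_4_aux r H hunif hint t htau
end

section
/- For integers r ≥ k ≥ 1 and n sufficiently large (e.g., n ≥ 2r), the r-uniform n-vertex k-kernel system has minimum positive co-degree at least k: every (r-1)-set contained in some hyperedge is contained in at least k hyperedges. -/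
/-- For r ≥ k ≥ 1 and n ≥ 2r, the r-uniform n-vertex k-kernel system has minimum
positive co-degree at least k. -/
theorem stmt_6 {V : Type*} [Fintype V] [DecidableEq V] (r k n : ℕ)
    (hk : 1 ≤ k) (hkr : k ≤ r)
    (hn : Fintype.card V = n) (hn2 : 2 * r ≤ n)
    (X : Finset V) (hX : X.card = 2 * k - 1) :
    ∀ S : Finset V, S.card = r - 1 →
      (∃ h ∈ (Finset.univ.powersetCard r).filter
          (fun E : Finset V => k ≤ (E ∩ X).card), S ⊆ h) →
      k ≤ (((Finset.univ.powersetCard r).filter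
          (fun E : Finset V => k ≤ (E ∩ X).card)).filter fun h => S ⊆ h).card := by
  rintro S hS ⟨h, hh, hSh⟩
  simp only [Finset.mem_filter, Finset.mem_powersetCard] at hh
  obtain ⟨⟨-, hcard⟩, hkX⟩ := hh
  have hr1 : 1 ≤ r := le_trans hk hkr
  -- |S ∩ X| ≥ k - 1
  have hhS : (h \ S).card = 1 := by
    rw [Finset.card_sdiff_of_subset hSh, hcard, hS]; omega
  have hsub : h ∩ X ⊆ (S ∩ X) ∪ (h \ S) := by
    intro x hx
    simp only [Finset.mem_inter, Finset.mem_union, Finset.mem_sdiff] at *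
    by_cases hxS : x ∈ S
    · exact Or.inl ⟨hxS, hx.2⟩
    · exact Or.inr ⟨hx.1, hxS⟩
  have hSX : k - 1 ≤ (S ∩ X).card := by
    have := (Finset.card_le_card hsub).trans (Finset.card_union_le _ _)
    omega
  -- key injection lemma
  have key : ∀ W : Finset V, (∀ w ∈ W, w ∉ S ∧ k ≤ (insert w S ∩ X).card) →
      W.card ≤ (((Finset.univ.powersetCard r).filter
          (fun E : Finset V => k ≤ (E ∩ X).card)).filter fun h => S ⊆ h).card := by
    intro W hW
    apply Finset.card_le_card_of_injOn (fun w => insert w S)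
    · intro w hw
      obtain ⟨hwS, hkw⟩ := hW w hw
      simp only [Finset.mem_coe, Finset.mem_filter, Finset.mem_powersetCard]
      refine ⟨⟨⟨Finset.subset_univ _, ?_⟩, hkw⟩, Finset.subset_insert _ _⟩
      rw [Finset.card_insert_of_notMem hwS, hS]; omega
    · intro w hw w' hw' heq
      simp only at heq
      have : w ∈ insert w' S := heq ▸ Finset.mem_insert_self w S
      rcases Finset.mem_insert.mp this with h1 | h1
      · exact h1
      · exact absurd h1 (hW w hw).1
  by_cases hc : k ≤ (S ∩ X).card
  · -- case 1: any extension works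
    refine le_trans ?_ (key Sᶜ fun w hw => ⟨Finset.mem_compl.mp hw,
      le_trans hc (Finset.card_le_card fun x hx => ?_)⟩)
    · rw [Finset.card_compl, hn, hS]; omega
    · simp only [Finset.mem_inter] at *
      exact ⟨Finset.mem_insert_of_mem hx.1, hx.2⟩
  · -- case 2: extend by elements of X \ S
    refine le_trans ?_ (key (X \ S) fun w hw => ?_)
    · have := Finset.card_sdiff_add_card_inter X S
      rw [Finset.inter_comm] at this
      omega
    · simp only [Finset.mem_sdiff] at hw
      refine ⟨hw.2, ?_⟩
      have hsub2 : insert w (S ∩ X) ⊆ insert w S ∩ X := by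
        intro x hx
        rcases Finset.mem_insert.mp hx with rfl | hx
        · exact Finset.mem_inter.mpr ⟨Finset.mem_insert_self _ _, hw.1⟩
        · simp only [Finset.mem_inter] at hx ⊢
          exact ⟨Finset.mem_insert_of_mem hx.1, hx.2⟩
      have := Finset.card_le_card hsub2
      rw [Finset.card_insert_of_notMem (fun hx => hw.2 (Finset.mem_inter.mp hx).1)] at this
      omega
end

section
/- Let H be an intersecting r-uniform hypergraph with minimum positive co-degree at least k, and let X be a minimal transversal of H (no proper subset of X is a transversal). Then |X| ≥ k. -/
/-- A minimal transversal of a non-empty intersecting r-uniform hypergraph with minimum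
positive co-degree at least k has size at least k. -/
theorem stmt_9 {V : Type*} [Fintype V] [DecidableEq V] (r k : ℕ)
    (H : Finset (Finset V)) (hne : H.Nonempty)
    (hunif : ∀ h ∈ H, h.card = r)
    (hint : ∀ a ∈ H, ∀ b ∈ H, (a ∩ b).Nonempty)
    (hcodeg : ∀ S : Finset V, S.card = r - 1 → (∃ h ∈ H, S ⊆ h) →
      k ≤ (H.filter fun h => S ⊆ h).card)
    (X : Finset V)
    (hXt : ∀ h ∈ H, (h ∩ X).Nonempty)
    (hXmin : ∀ Y : Finset V, Y ⊂ X → ¬ (∀ h ∈ H, (h ∩ Y).Nonempty)) :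
    k ≤ X.card := by
  classical
  obtain ⟨h0, hh0⟩ := hne
  -- r ≥ 1
  have hr : 1 ≤ r := by
    have h1 : (h0 ∩ h0).Nonempty := hint h0 hh0 h0 hh0
    have h2 : h0.Nonempty := by simpa using h1
    have := Finset.card_pos.mpr h2
    rw [hunif h0 hh0] at this
    omega
  -- X nonempty: pick x ∈ X
  obtain ⟨x0, hx0⟩ := hXt h0 hh0
  have hxX : x0 ∈ X := (Finset.mem_inter.mp hx0).2
  -- private edge for x0
  have hsub : X.erase x0 ⊂ X := Finset.erase_ssubset hxX
  have := hXmin (X.erase x0) hsub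
  push_neg at this
  obtain ⟨h, hhH, hpriv⟩ := this
  have hpriv' : h ∩ X.erase x0 = ∅ := hpriv
  -- x0 ∈ h
  have hxh : x0 ∈ h := by
    obtain ⟨v, hv⟩ := hXt h hhH
    rcases Finset.mem_inter.mp hv with ⟨hvh, hvX⟩
    by_cases hvx : v = x0
    · exact hvx ▸ hvh
    · exfalso
      have : v ∈ h ∩ X.erase x0 :=
        Finset.mem_inter.mpr ⟨hvh, Finset.mem_erase.mpr ⟨hvx, hvX⟩⟩
      simp [hpriv'] at this
  set S : Finset V := h.erase x0 with hS
  have hScard : S.card = r - 1 := by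
    rw [hS, Finset.card_erase_of_mem hxh, hunif h hhH]
  have hSsub : S ⊆ h := Finset.erase_subset _ _
  have hk := hcodeg S hScard ⟨h, hhH, hSsub⟩
  -- S ∩ X = ∅
  have hSX : ∀ v ∈ S, v ∉ X := by
    intro v hvS hvX
    rcases Finset.mem_erase.mp hvS with ⟨hvx, hvh⟩
    have : v ∈ h ∩ X.erase x0 :=
      Finset.mem_inter.mpr ⟨hvh, Finset.mem_erase.mpr ⟨hvx, hvX⟩⟩
    simp [hpriv'] at this
  -- injection from edges containing S into X
  refine le_trans hk (Finset.card_le_card_of_injOn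
    (fun g => if hg : (g ∩ X).Nonempty then hg.choose else x0) ?_ ?_)
  · intro g hg
    rcases Finset.mem_filter.mp hg with ⟨hgH, hgS⟩
    have hne' : (g ∩ X).Nonempty := hXt g hgH
    simp only [dif_pos hne']
    exact (Finset.mem_inter.mp hne'.choose_spec).2
  · -- key: for g in the filter, g = S ∪ {f g}
    have key : ∀ g ∈ H.filter (fun h => S ⊆ h),
        g = insert (if hg : (g ∩ X).Nonempty then hg.choose else x0) S := by
      intro g hg
      rcases Finset.mem_filter.mp hg with ⟨hgH, hgS⟩
      have hne' : (g ∩ X).Nonempty := hXt g hgH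
      have hch : hne'.choose ∈ g ∩ X := hne'.choose_spec
      rcases Finset.mem_inter.mp hch with ⟨hcg, hcX⟩
      have hcS : hne'.choose ∉ S := fun hmem => hSX _ hmem hcX
      have hsd : (g \ S).card = 1 := by
        rw [Finset.card_sdiff_of_subset hgS, hunif g hgH, hScard]
        omega
      obtain ⟨a, ha⟩ := Finset.card_eq_one.mp hsd
      have hca : hne'.choose ∈ g \ S := Finset.mem_sdiff.mpr ⟨hcg, hcS⟩
      rw [ha, Finset.mem_singleton] at hca
      rw [dif_pos hne']
      apply Finset.Subset.antisymm
      · intro v hv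
        by_cases hvS : v ∈ S
        · exact Finset.mem_insert_of_mem hvS
        · have hvd : v ∈ g \ S := Finset.mem_sdiff.mpr ⟨hv, hvS⟩
          rw [ha, Finset.mem_singleton] at hvd
          rw [hvd, ← hca]
          exact Finset.mem_insert_self _ _
      · intro v hv
        rcases Finset.mem_insert.mp hv with h1 | h1
        · rw [h1]; exact hcg
        · exact hgS h1
    intro g1 hg1 g2 hg2 heq
    have e1 := key g1 (by simpa using hg1)
    have e2 := key g2 (by simpa using hg2)
    rw [e1, e2]
    simp only at heq
    rw [heq]
end

section
/- Let r ≥ 3 and n ≥ r^4/3. If H is an intersecting r-uniform n-vertex hypergraph with minimum positive co-degree at least 2 having the maximum number of hyperedges among all such hypergraphs, then H is a 2-kernel system: there exists a 3-element vertex set X such that the hyperedges of H are exactly the r-sets meeting X in at least 2 vertices. -/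
open Finset

section Helpers

variable {V : Type*} [DecidableEq V]

lemma exists_insert_of_card_succ {S e : Finset V} (hSe : S ⊆ e) (h : e.card = S.card + 1) :
    ∃ w, w ∉ S ∧ e = insert w S := by
  have hcard : (e \ S).card = 1 := by
    rw [card_sdiff_of_subset hSe, h]; omega
  obtain ⟨w, hw⟩ := card_eq_one.mp hcard
  refine ⟨w, ?_, ?_⟩
  · have : w ∈ e \ S := by rw [hw]; exact mem_singleton_self w
    exact (mem_sdiff.mp this).2
  · apply Finset.Subset.antisymm
    · intro x hx
      by_cases hxS : x ∈ S
      · exact mem_insert_of_mem hxS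
      · have : x ∈ e \ S := mem_sdiff.mpr ⟨hx, hxS⟩
        rw [hw] at this
        exact mem_insert.mpr (Or.inl (mem_singleton.mp this))
    · intro x hx
      rcases mem_insert.mp hx with h1 | h2
      · subst h1
        have : x ∈ e \ S := by rw [hw]; exact mem_singleton_self x
        exact (mem_sdiff.mp this).1
      · exact hSe h2

/-- The number of k-subsets of U containing a fixed T ⊆ U. -/

lemma count_full (U T : Finset V) (k : ℕ) (hTU : T ⊆ U) (hTk : T.card ≤ k) :
    ((U.powersetCard k).filter (fun e => T ⊆ e)).card
      = (U.card - T.card).choose (k - T.card) := by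
  rw [← card_sdiff_of_subset hTU, ← card_powersetCard (k - T.card) (U \ T)]
  apply card_nbij (i := fun e => e \ T)
  · intro e he
    simp only [mem_coe, mem_filter, mem_powersetCard] at he
    obtain ⟨⟨heU, hek⟩, hTe⟩ := he
    simp only [mem_coe, mem_powersetCard]
    exact ⟨sdiff_subset_sdiff heU Subset.rfl, by rw [card_sdiff_of_subset hTe, hek]⟩
  · intro e₁ he₁ e₂ he₂ h
    simp only [coe_filter, Set.mem_setOf_eq, mem_coe, mem_powersetCard] at he₁ he₂
    have h1 : e₁ = (e₁ \ T) ∪ T := by rw [sdiff_union_self_eq_union, union_eq_left.mpr he₁.2]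
    have h2 : e₂ = (e₂ \ T) ∪ T := by rw [sdiff_union_self_eq_union, union_eq_left.mpr he₂.2]
    simp only at h
    rw [h1, h2, h]
  · intro s hs
    simp only [mem_coe, mem_powersetCard] at hs
    obtain ⟨hsU, hsk⟩ := hs
    have hdisj : Disjoint s T := disjoint_of_subset_left hsU sdiff_disjoint
    refine ⟨s ∪ T, ?_, ?_⟩
    · simp only [coe_filter, Set.mem_setOf_eq, mem_powersetCard]
      refine ⟨⟨union_subset (hsU.trans sdiff_subset) hTU, ?_⟩, subset_union_right⟩
      rw [card_union_of_disjoint hdisj, hsk]; omega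
    · simp only
      rw [union_sdiff_right, sdiff_eq_self_of_disjoint hdisj]

lemma count_bound (U T : Finset V) (k : ℕ) (G : Finset (Finset V))
    (hG : ∀ e ∈ G, e.card = k ∧ T ⊆ e ∧ e ⊆ U) :
    G.card ≤ (U.card - T.card).choose (k - T.card) := by
  rcases G.eq_empty_or_nonempty with rfl | ⟨e₀, he₀⟩
  · simp
  have hTU : T ⊆ U := (hG e₀ he₀).2.1.trans (hG e₀ he₀).2.2
  have hTk : T.card ≤ k := by
    rw [← (hG e₀ he₀).1]; exact card_le_card (hG e₀ he₀).2.1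
  rw [← count_full U T k hTU hTk]
  apply card_le_card
  intro e he
  simp only [mem_filter, mem_powersetCard]
  exact ⟨⟨(hG e he).2.2, (hG e he).1⟩, (hG e he).2.1⟩

lemma card_le_sum_filter (G : Finset (Finset V)) (f : Finset V)
    (hmeet : ∀ e ∈ G, (e ∩ f).Nonempty) :
    G.card ≤ ∑ w ∈ f, (G.filter (fun e => w ∈ e)).card := by
  calc G.card ≤ (f.biUnion (fun w => G.filter (fun e => w ∈ e))).card := by
        apply card_le_card
        intro e he
        obtain ⟨w, hw⟩ := hmeet e he
        rw [mem_inter] at hw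
        exact mem_biUnion.mpr ⟨w, hw.2, mem_filter.mpr ⟨he, hw.1⟩⟩
  _ ≤ ∑ w ∈ f, (G.filter (fun e => w ∈ e)).card := card_biUnion_le

lemma inter_of_two_of_three {X E F : Finset V} (hX : X.card = 3)
    (hE : 2 ≤ (E ∩ X).card) (hF : 2 ≤ (F ∩ X).card) : (E ∩ F).Nonempty := by
  by_contra h
  rw [not_nonempty_iff_eq_empty] at h
  have hd : Disjoint (E ∩ X) (F ∩ X) := by
    rw [disjoint_left]
    intro a ha hb
    have : a ∈ E ∩ F := mem_inter.mpr ⟨(mem_inter.mp ha).1, (mem_inter.mp hb).1⟩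
    simp [h] at this
  have hle : (E ∩ X ∪ F ∩ X).card ≤ X.card :=
    card_le_card (union_subset inter_subset_right inter_subset_right)
  rw [card_union_of_disjoint hd, hX] at hle
  omega

lemma exists_class [Fintype V] (X p : Finset V) (hpX : p ⊆ X) (k : ℕ) (hpk : p.card ≤ k) :
    ∃ Ap : Finset (Finset V),
      Ap.card = (Fintype.card V - X.card).choose (k - p.card) ∧
      ∀ E ∈ Ap, E.card = k ∧ E ∩ X = p := by
  have hdisj : ∀ u : Finset V, u ⊆ univ \ X → Disjoint u X := fun u hu =>
    disjoint_of_subset_left hu sdiff_disjoint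
  refine ⟨((univ \ X).powersetCard (k - p.card)).image (· ∪ p), ?_, ?_⟩
  · rw [card_image_of_injOn, card_powersetCard, card_sdiff_of_subset (subset_univ X), card_univ]
    intro s hs t ht h
    simp only [mem_coe, mem_powersetCard] at hs ht
    simp only at h
    have recover : ∀ u : Finset V, u ⊆ univ \ X → (u ∪ p) \ X = u := by
      intro u hu
      rw [union_sdiff_distrib, sdiff_eq_self_of_disjoint (hdisj u hu),
        sdiff_eq_empty_iff_subset.mpr hpX, union_empty]
    rw [← recover s hs.1, ← recover t ht.1, h]
  · intro E hE
    obtain ⟨s, hs, rfl⟩ := mem_image.mp hE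
    rw [mem_powersetCard] at hs
    constructor
    · rw [card_union_of_disjoint (disjoint_of_subset_right hpX (hdisj s hs.1)), hs.2]
      omega
    · rw [union_inter_distrib_right, (disjoint_iff_inter_eq_empty).mp (hdisj s hs.1),
        inter_eq_left.mpr hpX, empty_union]

lemma kernel_card_lower [Fintype V] (r : ℕ) (hr : 3 ≤ r) (X : Finset V) (hX : X.card = 3) :
    3 * ((Fintype.card V - 3).choose (r - 2)) + (Fintype.card V - 3).choose (r - 3)
      ≤ ((univ.powersetCard r).filter (fun E : Finset V => 2 ≤ (E ∩ X).card)).card := by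
  classical
  obtain ⟨x, y, z, hxy, hxz, hyz, hXeq⟩ := card_eq_three.mp hX
  set K := ((univ.powersetCard r).filter (fun E : Finset V => 2 ≤ (E ∩ X).card)) with hK
  -- the four trace patterns
  have hsub1 : ({x, y} : Finset V) ⊆ X := by rw [hXeq]; intro a ha; simp at ha ⊢; tauto
  have hsub2 : ({x, z} : Finset V) ⊆ X := by rw [hXeq]; intro a ha; simp at ha ⊢; tauto
  have hsub3 : ({y, z} : Finset V) ⊆ X := by rw [hXeq]; intro a ha; simp at ha ⊢; tauto
  have hc1 : ({x, y} : Finset V).card = 2 := by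
    rw [card_insert_of_notMem (by simp [hxy]), card_singleton]
  have hc2 : ({x, z} : Finset V).card = 2 := by
    rw [card_insert_of_notMem (by simp [hxz]), card_singleton]
  have hc3 : ({y, z} : Finset V).card = 2 := by
    rw [card_insert_of_notMem (by simp [hyz]), card_singleton]
  obtain ⟨A₁, hA₁c, hA₁m⟩ := exists_class X {x, y} hsub1 r (by omega)
  obtain ⟨A₂, hA₂c, hA₂m⟩ := exists_class X {x, z} hsub2 r (by omega)
  obtain ⟨A₃, hA₃c, hA₃m⟩ := exists_class X {y, z} hsub3 r (by omega)
  obtain ⟨A₄, hA₄c, hA₄m⟩ := exists_class X X Subset.rfl r (by omega)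
  rw [hc1] at hA₁c; rw [hc2] at hA₂c; rw [hc3] at hA₃c; rw [hX] at hA₄c
  -- each class is inside K
  have hsubK : ∀ (A : Finset (Finset V)) (p : Finset V), 2 ≤ p.card →
      (∀ E ∈ A, E.card = r ∧ E ∩ X = p) → A ⊆ K := by
    intro A p hp hm E hE
    rw [hK, mem_filter, mem_powersetCard]
    exact ⟨⟨subset_univ E, (hm E hE).1⟩, by rw [(hm E hE).2]; exact hp⟩
  have hK1 : A₁ ⊆ K := hsubK A₁ {x, y} (by omega) hA₁m
  have hK2 : A₂ ⊆ K := hsubK A₂ {x, z} (by omega) hA₂m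
  have hK3 : A₃ ⊆ K := hsubK A₃ {y, z} (by omega) hA₃m
  have hK4 : A₄ ⊆ K := hsubK A₄ X (by omega) hA₄m
  -- pairwise disjoint
  have hdis : ∀ (A B : Finset (Finset V)) (p q : Finset V), p ≠ q →
      (∀ E ∈ A, E.card = r ∧ E ∩ X = p) → (∀ E ∈ B, E.card = r ∧ E ∩ X = q) →
      Disjoint A B := by
    intro A B p q hpq hmA hmB
    rw [disjoint_left]
    intro E hEA hEB
    exact hpq (((hmA E hEA).2).symm.trans ((hmB E hEB).2))
  have hzmem : z ∉ ({x, y} : Finset V) := by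
    simp only [mem_insert, mem_singleton]
    push_neg
    exact ⟨fun h => hxz h.symm, fun h => hyz h.symm⟩
  have hymem : y ∉ ({x, z} : Finset V) := by
    simp only [mem_insert, mem_singleton]
    push_neg
    exact ⟨fun h => hxy h.symm, hyz⟩
  have hxmem : x ∉ ({y, z} : Finset V) := by
    simp only [mem_insert, mem_singleton]
    push_neg
    exact ⟨hxy, hxz⟩
  have hne12 : ({x, y} : Finset V) ≠ {x, z} := by
    intro h; exact hymem (h ▸ (by simp : y ∈ ({x, y} : Finset V)))
  have hne13 : ({x, y} : Finset V) ≠ {y, z} := by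
    intro h; exact hxmem (h ▸ (by simp : x ∈ ({x, y} : Finset V)))
  have hne23 : ({x, z} : Finset V) ≠ {y, z} := by
    intro h; exact hxmem (h ▸ (by simp : x ∈ ({x, z} : Finset V)))
  have hne14 : ({x, y} : Finset V) ≠ X := by
    intro h
    have : z ∈ ({x, y} : Finset V) := by rw [h, hXeq]; simp
    exact hzmem this
  have hne24 : ({x, z} : Finset V) ≠ X := by
    intro h
    have : y ∈ ({x, z} : Finset V) := by rw [h, hXeq]; simp
    exact hymem this
  have hne34 : ({y, z} : Finset V) ≠ X := by
    intro h
    have : x ∈ ({y, z} : Finset V) := by rw [h, hXeq]; simp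
    exact hxmem this
  have d12 := hdis A₁ A₂ _ _ hne12 hA₁m hA₂m
  have d13 := hdis A₁ A₃ _ _ hne13 hA₁m hA₃m
  have d23 := hdis A₂ A₃ _ _ hne23 hA₂m hA₃m
  have d14 := hdis A₁ A₄ _ _ hne14 hA₁m hA₄m
  have d24 := hdis A₂ A₄ _ _ hne24 hA₂m hA₄m
  have d34 := hdis A₃ A₄ _ _ hne34 hA₃m hA₄m
  have hU : A₁ ∪ A₂ ∪ A₃ ∪ A₄ ⊆ K := by
    intro E hE
    rcases mem_union.mp hE with h | h
    · rcases mem_union.mp h with h | h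
      · rcases mem_union.mp h with h | h
        · exact hK1 h
        · exact hK2 h
      · exact hK3 h
    · exact hK4 h
  have hcardU : (A₁ ∪ A₂ ∪ A₃ ∪ A₄).card
      = A₁.card + A₂.card + A₃.card + A₄.card := by
    rw [card_union_of_disjoint (by
      rw [disjoint_union_left, disjoint_union_left]
      exact ⟨⟨d14, d24⟩, d34⟩),
      card_union_of_disjoint (by rw [disjoint_union_left]; exact ⟨d13, d23⟩),
      card_union_of_disjoint d12]
  rw [hX] at hA₁c hA₂c hA₃c
  have := card_le_card hU
  rw [hcardU, hA₁c, hA₂c, hA₃c, hA₄c] at this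
  omega

lemma kernel_codeg [Fintype V] (r : ℕ) (hr : 3 ≤ r) (hcV : r + 1 ≤ Fintype.card V)
    (X : Finset V) (hX : X.card = 3) (S : Finset V) (hS : S.card = r - 1)
    (hex : ∃ E ∈ (univ.powersetCard r).filter (fun E : Finset V => 2 ≤ (E ∩ X).card), S ⊆ E) :
    2 ≤ ((((univ.powersetCard r).filter (fun E : Finset V => 2 ≤ (E ∩ X).card))).filter
        (fun h => S ⊆ h)).card := by
  classical
  set K := ((univ.powersetCard r).filter (fun E : Finset V => 2 ≤ (E ∩ X).card)) with hK
  obtain ⟨E, hEK, hSE⟩ := hex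
  rw [hK, mem_filter, mem_powersetCard] at hEK
  obtain ⟨⟨-, hEr⟩, hEX⟩ := hEK
  have hmemK : ∀ w, w ∉ S → 2 ≤ ((insert w S) ∩ X).card → insert w S ∈ K := by
    intro w hw h2
    rw [hK, mem_filter, mem_powersetCard]
    refine ⟨⟨subset_univ _, ?_⟩, h2⟩
    rw [card_insert_of_notMem hw, hS]
    omega
  have key : ∃ a b : V, a ≠ b ∧ a ∉ S ∧ b ∉ S ∧ insert a S ∈ K ∧ insert b S ∈ K := by
    by_cases hSX : 2 ≤ (S ∩ X).card
    · have hcs : 2 ≤ (univ \ S).card := by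
        rw [card_sdiff_of_subset (subset_univ S), card_univ, hS]
        omega
      obtain ⟨a, ha, b, hb, hab⟩ := one_lt_card.mp (by omega : 1 < (univ \ S).card)
      have haS : a ∉ S := (mem_sdiff.mp ha).2
      have hbS : b ∉ S := (mem_sdiff.mp hb).2
      have hins : ∀ w, w ∉ S → insert w S ∈ K := by
        intro w hw
        apply hmemK w hw
        calc 2 ≤ (S ∩ X).card := hSX
        _ ≤ ((insert w S) ∩ X).card :=
            card_le_card (inter_subset_inter (subset_insert w S) Subset.rfl)
      exact ⟨a, b, hab, haS, hbS, hins a haS, hins b hbS⟩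
    · -- S meets X in exactly one vertex
      obtain ⟨w₀, hw₀S, hEeq⟩ := exists_insert_of_card_succ hSE (by rw [hEr, hS]; omega)
      have hsub : E ∩ X ⊆ insert w₀ (S ∩ X) := by
        intro a ha
        rw [mem_inter, hEeq, mem_insert] at ha
        rcases ha with ⟨h1 | h1, h2⟩
        · exact mem_insert.mpr (Or.inl h1)
        · exact mem_insert.mpr (Or.inr (mem_inter.mpr ⟨h1, h2⟩))
      have hcard1 : (S ∩ X).card = 1 := by
        have h1 := card_le_card hsub
        have h2 := card_insert_le w₀ (S ∩ X)
        omega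
      have hXS : (X \ S).card = 2 := by
        have := card_sdiff_add_card_inter X S
        rw [hX, inter_comm X S, hcard1] at this
        omega
      obtain ⟨a, ha, b, hb, hab⟩ := one_lt_card.mp (by omega : 1 < (X \ S).card)
      have haX : a ∈ X := (mem_sdiff.mp ha).1
      have hbX : b ∈ X := (mem_sdiff.mp hb).1
      have haS : a ∉ S := (mem_sdiff.mp ha).2
      have hbS : b ∉ S := (mem_sdiff.mp hb).2
      have hins : ∀ w, w ∉ S → w ∈ X → insert w S ∈ K := by
        intro w hwS hwX
        apply hmemK w hwS
        have hsub2 : insert w (S ∩ X) ⊆ (insert w S) ∩ X := by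
          intro a ha
          rcases mem_insert.mp ha with h | h
          · subst h; exact mem_inter.mpr ⟨mem_insert_self _ _, hwX⟩
          · exact mem_inter.mpr ⟨mem_insert_of_mem (mem_inter.mp h).1, (mem_inter.mp h).2⟩
        have : (insert w (S ∩ X)).card = 2 := by
          rw [card_insert_of_notMem (fun h => hwS (mem_inter.mp h).1), hcard1]
        rw [← this]
        exact card_le_card hsub2
      exact ⟨a, b, hab, haS, hbS, hins a haS haX, hins b hbS hbX⟩
  obtain ⟨a, b, hab, haS, hbS, haK, hbK⟩ := key
  have hne : insert a S ≠ insert b S := by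
    intro h
    have : a ∈ insert b S := h ▸ mem_insert_self a S
    rcases mem_insert.mp this with h' | h'
    · exact hab h'
    · exact haS h'
  have hpair : ({insert a S, insert b S} : Finset (Finset V)) ⊆ K.filter (fun h => S ⊆ h) := by
    intro t ht
    rcases mem_insert.mp ht with h | h
    · subst h; exact mem_filter.mpr ⟨haK, subset_insert a S⟩
    · rw [mem_singleton.mp h]; exact mem_filter.mpr ⟨hbK, subset_insert b S⟩
  calc 2 = ({insert a S, insert b S} : Finset (Finset V)).card := by
        rw [card_insert_of_notMem (by simp [hne]), card_singleton]
  _ ≤ (K.filter (fun h => S ⊆ h)).card := card_le_card hpair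

lemma nocover_bound (k : ℕ) (U : Finset V) (G : Finset (Finset V))
    (hunif : ∀ e ∈ G, e.card = k ∧ e ⊆ U)
    (hint : ∀ a ∈ G, ∀ b ∈ G, (a ∩ b).Nonempty)
    (hnc : ∀ v : V, ∃ f ∈ G, v ∉ f)
    (hne : G.Nonempty) :
    G.card ≤ k * (k * ((U.card - 2).choose (k - 2))) := by
  set N := (U.card - 2).choose (k - 2) with hN
  -- level 2 : two fixed distinct vertices
  have lvl2 : ∀ v w : V, v ≠ w → (G.filter (fun e => v ∈ e ∧ w ∈ e)).card ≤ N := by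
    intro v w hvw
    have hTcard : ({v, w} : Finset V).card = 2 := by
      rw [card_insert_of_notMem (by simp [hvw]), card_singleton]
    have hb := count_bound U {v, w} k (G.filter (fun e => v ∈ e ∧ w ∈ e)) ?_
    · rwa [hTcard] at hb
    · intro e he
      rw [mem_filter] at he
      refine ⟨(hunif e he.1).1, ?_, (hunif e he.1).2⟩
      intro a ha
      rcases mem_insert.mp ha with h | h
      · exact h ▸ he.2.1
      · exact (mem_singleton.mp h) ▸ he.2.2
  -- level 1 : one fixed vertex
  have lvl1 : ∀ v : V, (G.filter (fun e => v ∈ e)).card ≤ k * N := by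
    intro v
    obtain ⟨f, hfG, hvf⟩ := hnc v
    have hmeet : ∀ e ∈ G.filter (fun e => v ∈ e), (e ∩ f).Nonempty := fun e he =>
      hint e (mem_filter.mp he).1 f hfG
    calc (G.filter (fun e => v ∈ e)).card
        ≤ ∑ w ∈ f, ((G.filter (fun e => v ∈ e)).filter (fun e => w ∈ e)).card :=
          card_le_sum_filter _ f hmeet
    _ ≤ ∑ _w ∈ f, N := by
          apply sum_le_sum
          intro w hw
          have hvw : v ≠ w := fun h => hvf (h ▸ hw)
          calc ((G.filter (fun e => v ∈ e)).filter (fun e => w ∈ e)).card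
              ≤ (G.filter (fun e => v ∈ e ∧ w ∈ e)).card := by
                apply card_le_card
                intro e he
                simp only [mem_filter] at he ⊢
                exact ⟨he.1.1, he.1.2, he.2⟩
          _ ≤ N := lvl2 v w hvw
    _ = f.card * N := by rw [sum_const, smul_eq_mul]
    _ = k * N := by rw [(hunif f hfG).1]
  obtain ⟨e₀, he₀⟩ := hne
  have hmeet0 : ∀ e ∈ G, (e ∩ e₀).Nonempty := fun e he => hint e he e₀ he₀
  calc G.card ≤ ∑ v ∈ e₀, (G.filter (fun e => v ∈ e)).card := card_le_sum_filter G e₀ hmeet0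
  _ ≤ ∑ _v ∈ e₀, k * N := sum_le_sum (fun v _ => lvl1 v)
  _ = e₀.card * (k * N) := by rw [sum_const, smul_eq_mul]
  _ = k * (k * N) := by rw [(hunif e₀ he₀).1]

lemma nopair_bound [Fintype V] (r : ℕ) (G : Finset (Finset V))
    (hunif : ∀ e ∈ G, e.card = r)
    (hint : ∀ a ∈ G, ∀ b ∈ G, (a ∩ b).Nonempty)
    (hnp : ∀ v w : V, ∃ f ∈ G, v ∉ f ∧ w ∉ f)
    (hne : G.Nonempty) :
    G.card ≤ r * (r * (r * ((Fintype.card V - 3).choose (r - 3)))) := by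
  set N := (Fintype.card V - 3).choose (r - 3) with hN
  have lvl3 : ∀ v w t : V, v ≠ w → v ≠ t → w ≠ t →
      (G.filter (fun e => v ∈ e ∧ w ∈ e ∧ t ∈ e)).card ≤ N := by
    intro v w t hvw hvt hwt
    have hTcard : ({v, w, t} : Finset V).card = 3 := by
      rw [card_insert_of_notMem (by simp [hvw, hvt]),
        card_insert_of_notMem (by simp [hwt]), card_singleton]
    have := count_bound univ {v, w, t} r (G.filter (fun e => v ∈ e ∧ w ∈ e ∧ t ∈ e)) ?_
    · rwa [card_univ, hTcard] at this
    · intro e he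
      rw [mem_filter] at he
      refine ⟨hunif e he.1, ?_, subset_univ e⟩
      intro a ha
      rcases mem_insert.mp ha with h | h
      · exact h ▸ he.2.1
      rcases mem_insert.mp h with h' | h'
      · exact h' ▸ he.2.2.1
      · exact (mem_singleton.mp h') ▸ he.2.2.2
  have lvl2 : ∀ v w : V, v ≠ w → (G.filter (fun e => v ∈ e ∧ w ∈ e)).card ≤ r * N := by
    intro v w hvw
    obtain ⟨f, hfG, hvf, hwf⟩ := hnp v w
    have hmeet : ∀ e ∈ G.filter (fun e => v ∈ e ∧ w ∈ e), (e ∩ f).Nonempty := fun e he =>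
      hint e (mem_filter.mp he).1 f hfG
    calc (G.filter (fun e => v ∈ e ∧ w ∈ e)).card
        ≤ ∑ t ∈ f, ((G.filter (fun e => v ∈ e ∧ w ∈ e)).filter (fun e => t ∈ e)).card :=
          card_le_sum_filter _ f hmeet
    _ ≤ ∑ _t ∈ f, N := by
          apply sum_le_sum
          intro t ht
          have hvt : v ≠ t := fun h => hvf (h ▸ ht)
          have hwt : w ≠ t := fun h => hwf (h ▸ ht)
          calc ((G.filter (fun e => v ∈ e ∧ w ∈ e)).filter (fun e => t ∈ e)).card
              ≤ (G.filter (fun e => v ∈ e ∧ w ∈ e ∧ t ∈ e)).card := by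
                apply card_le_card
                intro e he
                simp only [mem_filter] at he ⊢
                exact ⟨he.1.1, he.1.2.1, he.1.2.2, he.2⟩
          _ ≤ N := lvl3 v w t hvw hvt hwt
    _ = f.card * N := by rw [sum_const, smul_eq_mul]
    _ = r * N := by rw [hunif f hfG]
  have lvl1 : ∀ v : V, (G.filter (fun e => v ∈ e)).card ≤ r * (r * N) := by
    intro v
    obtain ⟨f, hfG, hvf, -⟩ := hnp v v
    have hmeet : ∀ e ∈ G.filter (fun e => v ∈ e), (e ∩ f).Nonempty := fun e he =>
      hint e (mem_filter.mp he).1 f hfG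
    calc (G.filter (fun e => v ∈ e)).card
        ≤ ∑ w ∈ f, ((G.filter (fun e => v ∈ e)).filter (fun e => w ∈ e)).card :=
          card_le_sum_filter _ f hmeet
    _ ≤ ∑ _w ∈ f, r * N := by
          apply sum_le_sum
          intro w hw
          have hvw : v ≠ w := fun h => hvf (h ▸ hw)
          calc ((G.filter (fun e => v ∈ e)).filter (fun e => w ∈ e)).card
              ≤ (G.filter (fun e => v ∈ e ∧ w ∈ e)).card := by
                apply card_le_card
                intro e he
                simp only [mem_filter] at he ⊢
                exact ⟨he.1.1, he.1.2, he.2⟩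
          _ ≤ r * N := lvl2 v w hvw
    _ = f.card * (r * N) := by rw [sum_const, smul_eq_mul]
    _ = r * (r * N) := by rw [hunif f hfG]
  obtain ⟨e₀, he₀⟩ := hne
  have hmeet0 : ∀ e ∈ G, (e ∩ e₀).Nonempty := fun e he => hint e he e₀ he₀
  calc G.card ≤ ∑ v ∈ e₀, (G.filter (fun e => v ∈ e)).card := card_le_sum_filter G e₀ hmeet0
  _ ≤ ∑ _v ∈ e₀, r * (r * N) := sum_le_sum (fun v _ => lvl1 v)
  _ = e₀.card * (r * (r * N)) := by rw [sum_const, smul_eq_mul]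
  _ = r * (r * (r * N)) := by rw [hunif e₀ he₀]

end Helpers

lemma poly1 (s : ℕ) : (s + 3) * ((s + 3) * (s + 3)) * (s + 1) + 3 * s + 9 < (s + 3) ^ 4 := by
  nlinarith [sq_nonneg s, s.zero_le]
lemma poly2 (s : ℕ) : 3 * ((s + 2) * (s + 2) * (s + 1)) + 9 < (s + 3) ^ 4 := by
  nlinarith [sq_nonneg s, s.zero_le]
lemma poly3 (r : ℕ) (hr : 3 ≤ r) : r + 4 ≤ r ^ 3 := by
  obtain ⟨s, rfl⟩ : ∃ s, r = s + 3 := ⟨r - 3, by omega⟩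
  nlinarith [sq_nonneg s, s.zero_le]
lemma poly4 (r : ℕ) (hr : 3 ≤ r) : r ^ 3 * 3 ≤ r ^ 4 := by
  obtain ⟨s, rfl⟩ : ∃ s, r = s + 3 := ⟨r - 3, by omega⟩
  nlinarith [sq_nonneg s, s.zero_le]

set_option maxHeartbeats 1000000 in
/-- For r ≥ 3 and n ≥ r⁴/3, a maximum-size intersecting r-uniform n-vertex hypergraph
with minimum positive co-degree at least 2 is a 2-kernel system. -/
theorem stmt_10 {V : Type*} [Fintype V] [DecidableEq V] (r n : ℕ)
    (hr : 3 ≤ r) (hn : Fintype.card V = n) (hn2 : r ^ 4 ≤ 3 * n)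
    (H : Finset (Finset V))
    (hunif : ∀ h ∈ H, h.card = r)
    (hint : ∀ a ∈ H, ∀ b ∈ H, (a ∩ b).Nonempty)
    (hcodeg : ∀ S : Finset V, S.card = r - 1 → (∃ h ∈ H, S ⊆ h) →
      2 ≤ (H.filter fun h => S ⊆ h).card)
    (hmax : ∀ H' : Finset (Finset V),
      (∀ h ∈ H', h.card = r) →
      (∀ a ∈ H', ∀ b ∈ H', (a ∩ b).Nonempty) →
      (∀ S : Finset V, S.card = r - 1 → (∃ h ∈ H', S ⊆ h) →
        2 ≤ (H'.filter fun h => S ⊆ h).card) →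
      H'.card ≤ H.card) :
    ∃ X : Finset V, X.card = 3 ∧
      H = (Finset.univ.powersetCard r).filter (fun E : Finset V => 2 ≤ (E ∩ X).card) := by
  classical
  -- basic numeric facts
  have hr3n : r ^ 3 ≤ n := by have := poly4 r hr; omega
  have hrn : r + 4 ≤ n := by have := poly3 r hr; omega
  set C2 := (n - 3).choose (r - 2) with hC2
  set C3 := (n - 3).choose (r - 3) with hC3
  -- Step B : lower bound on H.card via a kernel system
  obtain ⟨X₀, -, hX₀⟩ := exists_subset_card_eq (show 3 ≤ (univ : Finset V).card by
    rw [card_univ, hn]; omega)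
  set K₀ := ((univ.powersetCard r).filter (fun E : Finset V => 2 ≤ (E ∩ X₀).card)) with hK₀
  have hK₀unif : ∀ h ∈ K₀, h.card = r := by
    intro h hh
    rw [hK₀, mem_filter, mem_powersetCard] at hh
    exact hh.1.2
  have hK₀int : ∀ a ∈ K₀, ∀ b ∈ K₀, (a ∩ b).Nonempty := by
    intro a ha b hb
    rw [hK₀, mem_filter] at ha hb
    exact inter_of_two_of_three hX₀ ha.2 hb.2
  have hK₀codeg : ∀ S : Finset V, S.card = r - 1 → (∃ h ∈ K₀, S ⊆ h) →
      2 ≤ (K₀.filter fun h => S ⊆ h).card := by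
    intro S hS hex
    exact kernel_codeg r hr (by rw [hn]; omega) X₀ hX₀ S hS hex
  have hHlb : 3 * C2 + C3 ≤ H.card := by
    calc 3 * C2 + C3 ≤ K₀.card := by
          have h := kernel_card_lower r hr X₀ hX₀
          rwa [hn] at h
    _ ≤ H.card := hmax K₀ hK₀unif hK₀int hK₀codeg
  have hC2pos : 0 < C2 := Nat.choose_pos (by omega)
  have hC3pos : 0 < C3 := Nat.choose_pos (by omega)
  have hHne : H.Nonempty := card_pos.mp (by omega)
  -- Step C : no single vertex covers H
  have h1cov : ∀ v : V, ∃ e ∈ H, v ∉ e := by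
    intro v
    by_contra hcon
    push_neg at hcon
    obtain ⟨e, he⟩ := hHne
    have hv : v ∈ e := hcon e he
    have hS : (e.erase v).card = r - 1 := by rw [card_erase_of_mem hv, hunif e he]
    have h2 := hcodeg (e.erase v) hS ⟨e, he, erase_subset v e⟩
    have hsecond : ∃ e' ∈ H, e.erase v ⊆ e' ∧ e' ≠ e := by
      by_contra hno
      push_neg at hno
      have hsub : (H.filter fun h => e.erase v ⊆ h) ⊆ {e} := fun f hf =>
        mem_singleton.mpr (hno f (mem_filter.mp hf).1 (mem_filter.mp hf).2)
      have := card_le_card hsub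
      rw [card_singleton] at this
      omega
    obtain ⟨e', he', hsub, hne'⟩ := hsecond
    have hcard : e'.card = (e.erase v).card + 1 := by rw [hunif e' he', hS]; omega
    obtain ⟨w, hw, he'eq⟩ := exists_insert_of_card_succ hsub hcard
    have hv' : v ∈ e' := hcon e' he'
    rw [he'eq, mem_insert] at hv'
    rcases hv' with h' | h'
    · apply hne'
      rw [he'eq, ← h', insert_erase hv]
    · exact (notMem_erase v e) h'
  -- "second edge" helper
  have hsecond : ∀ e ∈ H, ∀ v ∈ e, ∃ w, w ∉ e ∧ insert w (e.erase v) ∈ H := by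
    intro e heH v hv
    have hS : (e.erase v).card = r - 1 := by rw [card_erase_of_mem hv, hunif e heH]
    have h2 := hcodeg (e.erase v) hS ⟨e, heH, erase_subset v e⟩
    have hsec : ∃ e' ∈ H, e.erase v ⊆ e' ∧ e' ≠ e := by
      by_contra hno
      push_neg at hno
      have hsub : (H.filter fun h => e.erase v ⊆ h) ⊆ {e} := fun f hf =>
        mem_singleton.mpr (hno f (mem_filter.mp hf).1 (mem_filter.mp hf).2)
      have := card_le_card hsub
      rw [card_singleton] at this
      omega
    obtain ⟨e', he', hsub, hne'⟩ := hsec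
    have hcard : e'.card = (e.erase v).card + 1 := by rw [hunif e' he', hS]; omega
    obtain ⟨w, hw, he'eq⟩ := exists_insert_of_card_succ hsub hcard
    have hwv : w ≠ v := by
      intro h
      apply hne'
      rw [he'eq, h, insert_erase hv]
    have hwe : w ∉ e := by
      intro h
      exact hw (mem_erase.mpr ⟨hwv, h⟩)
    exact ⟨w, hwe, he'eq ▸ he'⟩
  -- Step D : a pair {x, y} covers H
  have h2cov : ∃ x y : V, x ≠ y ∧ ∀ e ∈ H, x ∈ e ∨ y ∈ e := by
    by_contra hcon
    push_neg at hcon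
    have hnp : ∀ v w : V, ∃ f ∈ H, v ∉ f ∧ w ∉ f := by
      intro v w
      by_cases hvw : v = w
      · obtain ⟨f, hf, hvf⟩ := h1cov v
        exact ⟨f, hf, hvf, hvw ▸ hvf⟩
      · exact hcon v w hvw
    have hb := nopair_bound r H hunif hint hnp hHne
    rw [hn, ← hC3] at hb
    -- numeric contradiction : r^3 * C3 < 3 * C2
    have hid : C2 * (r - 2) = C3 * ((n - 3) - (r - 3)) := by
      have h1 : r - 2 = (r - 3) + 1 := by omega
      rw [hC2, hC3, h1, Nat.choose_succ_right_eq]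
    have hkey : r * (r * (r * C3)) < 3 * C2 := by
      by_contra hcon2
      push_neg at hcon2
      have h4 : 3 * C2 * (r - 2) ≤ r * (r * (r * C3)) * (r - 2) :=
        Nat.mul_le_mul_right _ hcon2
      have h5 : 3 * (C3 * ((n - 3) - (r - 3))) ≤ (r * (r * r) * (r - 2)) * C3 := by
        calc 3 * (C3 * ((n - 3) - (r - 3))) = 3 * (C2 * (r - 2)) := by rw [hid]
        _ = 3 * C2 * (r - 2) := by ring
        _ ≤ r * (r * (r * C3)) * (r - 2) := h4
        _ = (r * (r * r) * (r - 2)) * C3 := by ring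
      have h6 : 3 * ((n - 3) - (r - 3)) ≤ r * (r * r) * (r - 2) := by
        have h7 : C3 * (3 * ((n - 3) - (r - 3))) ≤ C3 * (r * (r * r) * (r - 2)) := by
          calc C3 * (3 * ((n - 3) - (r - 3))) = 3 * (C3 * ((n - 3) - (r - 3))) := by ring
          _ ≤ (r * (r * r) * (r - 2)) * C3 := h5
          _ = C3 * (r * (r * r) * (r - 2)) := by ring
        exact Nat.le_of_mul_le_mul_left h7 hC3pos
      -- pure arithmetic contradiction
      obtain ⟨s, rfl⟩ : ∃ s, r = s + 3 := ⟨r - 3, by omega⟩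
      obtain ⟨t, ht⟩ : ∃ t, n = t + s + 3 := ⟨n - s - 3, by omega⟩
      have h7 : 3 * t ≤ (s + 3) * ((s + 3) * (s + 3)) * (s + 1) := by
        have e1 : n - 3 - (s + 3 - 3) = t := by omega
        have e2 : s + 3 - 2 = s + 1 := by omega
        rwa [e1, e2] at h6
      have h8 : (s + 3) ^ 4 ≤ 3 * (t + s + 3) := by rw [← ht]; exact hn2
      linarith [poly1 s, h7, h8]
    omega
  obtain ⟨x, y, hxy, hcov⟩ := h2cov
  -- Step E : structure of H relative to the cover
  set W : Finset V := univ \ {x, y} with hW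
  have hWcard : W.card = n - 2 := by
    rw [hW, card_sdiff_of_subset (subset_univ _), card_univ, hn, card_pair hxy]
  set FA := H.filter (fun e => x ∈ e ∧ y ∉ e) with hFA
  set FB := H.filter (fun e => y ∈ e ∧ x ∉ e) with hFB
  set FC := H.filter (fun e => x ∈ e ∧ y ∈ e) with hFC
  have hABC : FA ∪ FB ∪ FC = H := by
    ext e
    simp only [hFA, hFB, hFC, mem_union, mem_filter]
    constructor
    · rintro ((h | h) | h) <;> exact h.1
    · intro he
      rcases hcov e he with hx | hy
      · by_cases hy : y ∈ e
        · exact Or.inr ⟨he, hx, hy⟩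
        · exact Or.inl (Or.inl ⟨he, hx, hy⟩)
      · by_cases hx : x ∈ e
        · exact Or.inr ⟨he, hx, hy⟩
        · exact Or.inl (Or.inr ⟨he, hy, hx⟩)
  have hpart : H.card = FA.card + FB.card + FC.card := by
    rw [← hABC,
      card_union_of_disjoint, card_union_of_disjoint]
    · rw [disjoint_left]
      intro e he1 he2
      rw [hFA, mem_filter] at he1
      rw [hFB, mem_filter] at he2
      exact he2.2.2 he1.2.1
    · rw [disjoint_left]
      intro e he1 he2
      rw [mem_union] at he1
      rw [hFC, mem_filter] at he2
      rcases he1 with h | h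
      · rw [hFA, mem_filter] at h
        exact h.2.2 he2.2.2
      · rw [hFB, mem_filter] at h
        exact h.2.2 he2.2.1
  -- mirror maps
  have hmirrorA : ∀ e ∈ FA, insert y (e.erase x) ∈ FB := by
    intro e he
    rw [hFA, mem_filter] at he
    obtain ⟨heH, hx, hy⟩ := he
    obtain ⟨w, hwe, hwH⟩ := hsecond e heH x hx
    have hwy : w = y := by
      rcases hcov _ hwH with h | h
      · rw [mem_insert] at h
        rcases h with h | h
        · exact absurd (h ▸ hx) hwe
        · exact absurd h (notMem_erase x e)
      · rw [mem_insert] at h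
        rcases h with h | h
        · exact h.symm
        · exact absurd (mem_of_mem_erase h) hy
    rw [hFB, mem_filter]
    refine ⟨hwy ▸ hwH, mem_insert_self y _, ?_⟩
    rw [mem_insert]
    push_neg
    exact ⟨hxy, notMem_erase x e⟩
  have hmirrorB : ∀ e ∈ FB, insert x (e.erase y) ∈ FA := by
    intro e he
    rw [hFB, mem_filter] at he
    obtain ⟨heH, hy, hx⟩ := he
    obtain ⟨w, hwe, hwH⟩ := hsecond e heH y hy
    have hwx : w = x := by
      rcases hcov _ hwH with h | h
      · rw [mem_insert] at h
        rcases h with h | h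
        · exact h.symm
        · exact absurd (mem_of_mem_erase h) hx
      · rw [mem_insert] at h
        rcases h with h | h
        · exact absurd (h ▸ hy) hwe
        · exact absurd h (notMem_erase y e)
    rw [hFA, mem_filter]
    refine ⟨hwx ▸ hwH, mem_insert_self x _, ?_⟩
    rw [mem_insert]
    push_neg
    exact ⟨fun h => hxy h.symm, notMem_erase y e⟩
  set D := FA.image (fun e => e.erase x) with hD
  have hAx : ∀ e ∈ FA, x ∈ e ∧ y ∉ e ∧ e ∈ H := by
    intro e he
    rw [hFA, mem_filter] at he
    exact ⟨he.2.1, he.2.2, he.1⟩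
  have hBy : ∀ e ∈ FB, y ∈ e ∧ x ∉ e ∧ e ∈ H := by
    intro e he
    rw [hFB, mem_filter] at he
    exact ⟨he.2.1, he.2.2, he.1⟩
  have hDcardA : D.card = FA.card := by
    rw [hD]
    apply card_image_of_injOn
    intro e₁ he₁ e₂ he₂ h
    simp only at h
    rw [← insert_erase (hAx e₁ he₁).1, ← insert_erase (hAx e₂ he₂).1, h]
  have hDprops : ∀ d ∈ D, d.card = r - 1 ∧ d ⊆ W := by
    intro d hd
    obtain ⟨e, he, rfl⟩ := mem_image.mp hd
    obtain ⟨hx, hy, heH⟩ := hAx e he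
    constructor
    · rw [card_erase_of_mem hx, hunif e heH]
    · intro a ha
      rw [hW, mem_sdiff, mem_insert, mem_singleton]
      push_neg
      exact ⟨mem_univ a, (mem_erase.mp ha).1, fun h => hy (h ▸ mem_of_mem_erase ha)⟩
  have hDB : ∀ d ∈ D, insert y d ∈ FB := by
    intro d hd
    obtain ⟨e, he, rfl⟩ := mem_image.mp hd
    exact hmirrorA e he
  have hDint : ∀ d₁ ∈ D, ∀ d₂ ∈ D, (d₁ ∩ d₂).Nonempty := by
    intro d₁ hd₁ d₂ hd₂
    obtain ⟨e₁, he₁, rfl⟩ := mem_image.mp hd₁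
    obtain ⟨hx₁, hy₁, he₁H⟩ := hAx e₁ he₁
    have hb₂ := hDB d₂ hd₂
    obtain ⟨hyb, hxb, hbH⟩ := hBy _ hb₂
    obtain ⟨v, hv⟩ := hint e₁ he₁H _ hbH
    rw [mem_inter, mem_insert] at hv
    obtain ⟨hv₁, hv₂⟩ := hv
    rcases hv₂ with h | h
    · exact absurd (h ▸ hv₁) hy₁
    · refine ⟨v, mem_inter.mpr ⟨mem_erase.mpr ⟨?_, hv₁⟩, h⟩⟩
      intro hvx
      have := (hDprops d₂ hd₂).2 h
      rw [hW, mem_sdiff, mem_insert] at this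
      exact this.2 (Or.inl hvx)
  have hDne : D.Nonempty := by
    obtain ⟨e, he, hye⟩ := h1cov y
    have hxe : x ∈ e := (hcov e he).resolve_right (fun h => hye h)
    have heA : e ∈ FA := by rw [hFA, mem_filter]; exact ⟨he, hxe, hye⟩
    exact ⟨e.erase x, mem_image.mpr ⟨e, heA, rfl⟩⟩
  -- B-image equals D
  have hBimage : FB.image (fun e => e.erase y) = D := by
    apply Finset.Subset.antisymm
    · intro d hd
      obtain ⟨e, he, rfl⟩ := mem_image.mp hd
      have hA := hmirrorB e he
      have hxE : x ∉ e.erase y := fun h => (hBy e he).2.1 (mem_of_mem_erase h)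
      rw [hD, mem_image]
      exact ⟨insert x (e.erase y), hA, by rw [erase_insert hxE]⟩
    · intro d hd
      have hB := hDB d hd
      have hyd : y ∉ d := by
        intro h
        have := (hDprops d hd).2 h
        rw [hW, mem_sdiff, mem_insert, mem_singleton] at this
        exact this.2 (Or.inr rfl)
      rw [mem_image]
      exact ⟨insert y d, hB, by rw [erase_insert hyd]⟩
  have hDcardB : D.card = FB.card := by
    rw [← hBimage]
    apply card_image_of_injOn
    intro e₁ he₁ e₂ he₂ h
    simp only at h
    rw [← insert_erase (hBy e₁ he₁).1, ← insert_erase (hBy e₂ he₂).1, h]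
  -- bound on FC and lower bound on D
  have hCub : FC.card ≤ (n - 2).choose (r - 2) := by
    have := count_bound univ {x, y} r FC (by
      intro e he
      rw [hFC, mem_filter] at he
      refine ⟨hunif e he.1, ?_, subset_univ e⟩
      intro a ha
      rcases mem_insert.mp ha with h | h
      · exact h ▸ he.2.1
      · exact (mem_singleton.mp h) ▸ he.2.2)
    rwa [card_univ, hn, card_pair hxy] at this
  have hpascal : (n - 2).choose (r - 2) = C3 + C2 := by
    have h1 : n - 2 = (n - 3) + 1 := by omega
    have h2 : r - 2 = (r - 3) + 1 := by omega
    rw [hC2, hC3, h1, h2, Nat.choose_succ_succ]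
  have hHcard : H.card = D.card + D.card + FC.card := by omega
  have hDlb : C2 ≤ D.card := by omega
  -- Step F : D has a one-vertex cover
  have hzcov : ∃ z, ∀ d ∈ D, z ∈ d := by
    by_contra hcon
    push_neg at hcon
    have hb := nocover_bound (r - 1) W D (fun d hd => hDprops d hd) hDint hcon hDne
    have hW2 : W.card - 2 = n - 4 := by omega
    have hr2 : r - 1 - 2 = r - 3 := by omega
    rw [hW2, hr2] at hb
    set M := (n - 4).choose (r - 3) with hM
    have hid : C2 * (r - 2) = (n - 3) * M := by
      have h1 : n - 3 = (n - 4) + 1 := by omega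
      have h2 : r - 2 = (r - 3) + 1 := by omega
      rw [hC2, hM, h1, h2, ← Nat.add_one_mul_choose_eq]
    have hMpos : 0 < M := Nat.choose_pos (by omega)
    have hkey : (r - 1) * ((r - 1) * M) < C2 := by
      by_contra hcon2
      push_neg at hcon2
      have h4 : C2 * (r - 2) ≤ (r - 1) * ((r - 1) * M) * (r - 2) :=
        Nat.mul_le_mul_right _ hcon2
      rw [hid] at h4
      have h5 : (n - 3) * M ≤ ((r - 1) * (r - 1) * (r - 2)) * M := by
        calc (n - 3) * M ≤ (r - 1) * ((r - 1) * M) * (r - 2) := h4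
        _ = ((r - 1) * (r - 1) * (r - 2)) * M := by ring
      have h6 : n - 3 ≤ (r - 1) * (r - 1) * (r - 2) :=
        Nat.le_of_mul_le_mul_right h5 hMpos
      obtain ⟨s, rfl⟩ : ∃ s, r = s + 3 := ⟨r - 3, by omega⟩
      have hs1 : s + 3 - 1 = s + 2 := by omega
      have hs2 : s + 3 - 2 = s + 1 := by omega
      rw [hs1, hs2] at h6
      obtain ⟨t, ht⟩ : ∃ t, n = t + s + 3 := ⟨n - s - 3, by omega⟩
      have h7 : t + s ≤ (s + 2) * (s + 2) * (s + 1) := by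
        have e1 : n - 3 = t + s := by omega
        rwa [e1] at h6
      have h8 : (s + 3) ^ 4 ≤ 3 * (t + s + 3) := by rw [← ht]; exact hn2
      linarith [poly2 s, h7, h8]
    omega
  obtain ⟨z, hz⟩ := hzcov
  have hzW : z ∈ W := by
    obtain ⟨d, hd⟩ := hDne
    exact (hDprops d hd).2 (hz d hd)
  have hzx : z ≠ x := by
    intro h
    rw [hW, mem_sdiff, mem_insert] at hzW
    exact hzW.2 (Or.inl h)
  have hzy : z ≠ y := by
    intro h
    rw [hW, mem_sdiff, mem_insert, mem_singleton] at hzW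
    exact hzW.2 (Or.inr h)
  -- Step G : D and FC are full
  set Dfull := (W.powersetCard (r - 1)).filter (fun d => ({z} : Finset V) ⊆ d) with hDfull
  have hDfull_card : Dfull.card = C2 := by
    rw [hDfull, count_full W {z} (r - 1) (singleton_subset_iff.mpr hzW) (by
      rw [card_singleton]; omega), hWcard, card_singleton, hC2]
    congr 1 <;> omega
  have hDsub : D ⊆ Dfull := by
    intro d hd
    rw [hDfull, mem_filter, mem_powersetCard]
    exact ⟨⟨(hDprops d hd).2, (hDprops d hd).1⟩, singleton_subset_iff.mpr (hz d hd)⟩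
  have hDeq : D = Dfull := eq_of_subset_of_card_le hDsub (by omega)
  have hDcard : D.card = C2 := by rw [hDeq, hDfull_card]
  set Cfull := ((univ : Finset V).powersetCard r).filter
      (fun e => ({x, y} : Finset V) ⊆ e) with hCfull
  have hCfull_card : Cfull.card = (n - 2).choose (r - 2) := by
    rw [hCfull, count_full univ {x, y} r (subset_univ _) (by rw [card_pair hxy]; omega),
      card_univ, hn, card_pair hxy]
  have hCsub : FC ⊆ Cfull := by
    intro e he
    rw [hFC, mem_filter] at he
    rw [hCfull, mem_filter, mem_powersetCard]
    refine ⟨⟨subset_univ e, hunif e he.1⟩, ?_⟩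
    intro a ha
    rcases mem_insert.mp ha with h | h
    · exact h ▸ he.2.1
    · exact (mem_singleton.mp h) ▸ he.2.2
  have hCeq : FC = Cfull := eq_of_subset_of_card_le hCsub (by
    rw [hCfull_card]; omega)
  -- Step H : conclusion
  refine ⟨{x, y, z}, ?_, ?_⟩
  · rw [card_insert_of_notMem, card_insert_of_notMem, card_singleton]
    · rw [mem_singleton]; exact fun h => hzy h.symm
    · rw [mem_insert, mem_singleton]
      push_neg
      exact ⟨hxy, fun h => hzx h.symm⟩
  · ext E
    rw [mem_filter, mem_powersetCard]
    constructor
    · intro hE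
      refine ⟨⟨subset_univ E, hunif E hE⟩, ?_⟩
      rw [← hABC, mem_union, mem_union] at hE
      rcases hE with (hE | hE) | hE
      · -- E ∈ FA : x, z ∈ E
        obtain ⟨hxE, hyE, hEH⟩ := hAx E hE
        have hdE : E.erase x ∈ D := mem_image.mpr ⟨E, hE, rfl⟩
        have hzE : z ∈ E := mem_of_mem_erase (hz _ hdE)
        have hsub : ({x, z} : Finset V) ⊆ E ∩ {x, y, z} := by
          intro a ha
          rcases mem_insert.mp ha with h | h
          · rw [h]; exact mem_inter.mpr ⟨hxE, by simp⟩
          · rw [mem_singleton.mp h]; exact mem_inter.mpr ⟨hzE, by simp⟩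
        calc 2 = ({x, z} : Finset V).card := (card_pair hzx.symm).symm
        _ ≤ (E ∩ {x, y, z}).card := card_le_card hsub
      · -- E ∈ FB : y, z ∈ E
        obtain ⟨hyE, hxE, hEH⟩ := hBy E hE
        have hdE : E.erase y ∈ D := by
          rw [← hBimage]
          exact mem_image.mpr ⟨E, hE, rfl⟩
        have hzE : z ∈ E := mem_of_mem_erase (hz _ hdE)
        have hsub : ({y, z} : Finset V) ⊆ E ∩ {x, y, z} := by
          intro a ha
          rcases mem_insert.mp ha with h | h
          · rw [h]; exact mem_inter.mpr ⟨hyE, by simp⟩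
          · rw [mem_singleton.mp h]; exact mem_inter.mpr ⟨hzE, by simp⟩
        calc 2 = ({y, z} : Finset V).card := (card_pair hzy.symm).symm
        _ ≤ (E ∩ {x, y, z}).card := card_le_card hsub
      · -- E ∈ FC : x, y ∈ E
        rw [hFC, mem_filter] at hE
        have hsub : ({x, y} : Finset V) ⊆ E ∩ {x, y, z} := by
          intro a ha
          rcases mem_insert.mp ha with h | h
          · rw [h]; exact mem_inter.mpr ⟨hE.2.1, by simp⟩
          · rw [mem_singleton.mp h]; exact mem_inter.mpr ⟨hE.2.2, by simp⟩
        calc 2 = ({x, y} : Finset V).card := (card_pair hxy).symm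
        _ ≤ (E ∩ {x, y, z}).card := card_le_card hsub
    · rintro ⟨⟨-, hEr⟩, hEX⟩
      by_cases hxE : x ∈ E
      · by_cases hyE : y ∈ E
        · -- E ∈ Cfull = FC
          have : E ∈ Cfull := by
            rw [hCfull, mem_filter, mem_powersetCard]
            refine ⟨⟨subset_univ E, hEr⟩, ?_⟩
            intro a ha
            rcases mem_insert.mp ha with h | h
            · exact h ▸ hxE
            · exact (mem_singleton.mp h) ▸ hyE
          rw [← hCeq, hFC, mem_filter] at this
          exact this.1
        · -- x ∈ E, y ∉ E : must have z ∈ E, then E ∈ FA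
          have hzE : z ∈ E := by
            by_contra hzE
            have hsub : E ∩ {x, y, z} ⊆ {x} := by
              intro a ha
              rw [mem_inter, mem_insert, mem_insert, mem_singleton] at ha
              rw [mem_singleton]
              rcases ha.2 with h | h | h
              · exact h
              · exact absurd (h ▸ ha.1) hyE
              · exact absurd (h ▸ ha.1) hzE
            have := card_le_card hsub
            rw [card_singleton] at this
            omega
          have hEd : E.erase x ∈ Dfull := by
            rw [hDfull, mem_filter, mem_powersetCard]
            refine ⟨⟨?_, by rw [card_erase_of_mem hxE, hEr]⟩,
              singleton_subset_iff.mpr (mem_erase.mpr ⟨hzx, hzE⟩)⟩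
            intro a ha
            rw [hW, mem_sdiff, mem_insert, mem_singleton]
            push_neg
            exact ⟨mem_univ a, (mem_erase.mp ha).1,
              fun h => hyE (h ▸ mem_of_mem_erase ha)⟩
          rw [← hDeq, hD, mem_image] at hEd
          obtain ⟨e, he, heq⟩ := hEd
          have heE : e = E := by
            rw [← insert_erase (hAx e he).1, heq, insert_erase hxE]
          rw [← heE]
          exact (hAx e he).2.2
      · by_cases hyE : y ∈ E
        · -- y ∈ E, x ∉ E : must have z ∈ E, then E ∈ FB
          have hzE : z ∈ E := by
            by_contra hzE
            have hsub : E ∩ {x, y, z} ⊆ {y} := by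
              intro a ha
              rw [mem_inter, mem_insert, mem_insert, mem_singleton] at ha
              rw [mem_singleton]
              rcases ha.2 with h | h | h
              · exact absurd (h ▸ ha.1) hxE
              · exact h
              · exact absurd (h ▸ ha.1) hzE
            have := card_le_card hsub
            rw [card_singleton] at this
            omega
          have hEd : E.erase y ∈ Dfull := by
            rw [hDfull, mem_filter, mem_powersetCard]
            refine ⟨⟨?_, by rw [card_erase_of_mem hyE, hEr]⟩,
              singleton_subset_iff.mpr (mem_erase.mpr ⟨hzy, hzE⟩)⟩
            intro a ha
            rw [hW, mem_sdiff, mem_insert, mem_singleton]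
            push_neg
            exact ⟨mem_univ a, fun h => hxE (h ▸ mem_of_mem_erase ha),
              (mem_erase.mp ha).1⟩
          rw [← hDeq, ← hBimage, mem_image] at hEd
          obtain ⟨e, he, heq⟩ := hEd
          have heE : e = E := by
            rw [← insert_erase (hBy e he).1, heq, insert_erase hyE]
          rw [← heE]
          exact (hBy e he).2.2
        · -- neither x nor y in E : contradiction
          exfalso
          have hsub : E ∩ {x, y, z} ⊆ {z} := by
            intro a ha
            rw [mem_inter, mem_insert, mem_insert, mem_singleton] at ha
            rw [mem_singleton]
            rcases ha.2 with h | h | h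
            · exact absurd (h ▸ ha.1) hxE
            · exact absurd (h ▸ ha.1) hyE
            · exact h
          have := card_le_card hsub
          rw [card_singleton] at this
          omega
end

section
/- Let H be an intersecting r-uniform hypergraph with minimum positive co-degree at least k, let X be a minimum transversal of H with |X| = k, and for x ∈ X let H_x = {h \ {x} : h ∈ E(H), h ∩ X = {x}}. Then for any x, y ∈ X the hypergraphs H_x and H_y are equal, and H_x is an intersecting (r-1)-uniform hypergraph. -/
/-- If X is a minimum transversal of size k of an intersecting r-uniform hypergraph H
with minimum positive co-degree at least k (k ≥ 2), then the hypergraphs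
H_x = {h \ {x} : h ∈ H, h ∩ X = {x}} coincide for all x ∈ X, and each is an
intersecting (r-1)-uniform hypergraph. -/
theorem stmt_14 {V : Type*} [Fintype V] [DecidableEq V] (r k : ℕ) (hk : 2 ≤ k)
    (H : Finset (Finset V))
    (hunif : ∀ h ∈ H, h.card = r)
    (hint : ∀ a ∈ H, ∀ b ∈ H, (a ∩ b).Nonempty)
    (hcodeg : ∀ S : Finset V, S.card = r - 1 → (∃ h ∈ H, S ⊆ h) →
      k ≤ (H.filter fun h => S ⊆ h).card)
    (X : Finset V) (hXk : X.card = k)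
    (hXt : ∀ h ∈ H, (h ∩ X).Nonempty)
    (hXmin : ∀ T : Finset V, (∀ h ∈ H, (h ∩ T).Nonempty) → X.card ≤ T.card) :
    (∀ x ∈ X, ∀ y ∈ X,
      ((H.filter fun h => h ∩ X = {x}).image fun h => h.erase x) =
      ((H.filter fun h => h ∩ X = {y}).image fun h => h.erase y)) ∧
    (∀ x ∈ X,
      (∀ A ∈ (H.filter fun h => h ∩ X = {x}).image fun h => h.erase x, A.card = r - 1) ∧
      (∀ A ∈ (H.filter fun h => h ∩ X = {x}).image fun h => h.erase x,
       ∀ B ∈ (H.filter fun h => h ∩ X = {x}).image fun h => h.erase x,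
        (A ∩ B).Nonempty)) := by
  -- disjointness of the links from X
  have hdisj : ∀ x, ∀ h : Finset V, h ∩ X = {x} → (h.erase x) ∩ X = ∅ := by
    intro x h hhx
    rw [Finset.erase_inter, hhx, Finset.erase_singleton]
  have hmemx : ∀ x, ∀ h : Finset V, h ∩ X = {x} → x ∈ h := by
    intro x h hhx
    have : x ∈ h ∩ X := by rw [hhx]; exact Finset.mem_singleton_self x
    exact (Finset.mem_inter.mp this).1
  -- key lemma
  have key : ∀ x ∈ X, ∀ h ∈ H, h ∩ X = {x} → ∀ y ∈ X,
      insert y (h.erase x) ∈ H ∧ (insert y (h.erase x)) ∩ X = {y} := by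
    intro x hx h hh hhx y hy
    have hxh : x ∈ h := hmemx x h hhx
    set A := h.erase x with hA
    have hAX : A ∩ X = ∅ := hdisj x h hhx
    have hAcard : A.card = r - 1 := by
      rw [hA, Finset.card_erase_of_mem hxh, hunif h hh]
    have hsub : A ⊆ h := Finset.erase_subset x h
    set F := H.filter (fun h' => A ⊆ h') with hF
    have hkF : k ≤ F.card := hcodeg A hAcard ⟨h, hh, hsub⟩
    have hFsub : F ⊆ X.image (fun z => insert z A) := by
      intro h' hh'
      simp only [hF, Finset.mem_filter] at hh'
      obtain ⟨hh'H, hAh'⟩ := hh'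
      obtain ⟨z, hz⟩ := hXt h' hh'H
      rw [Finset.mem_inter] at hz
      have hzA : z ∉ A := by
        intro hzA
        have : z ∈ A ∩ X := Finset.mem_inter.mpr ⟨hzA, hz.2⟩
        simp [hAX] at this
      have hins : insert z A ⊆ h' := Finset.insert_subset hz.1 hAh'
      have hr1 : 1 ≤ r := by
        rw [← hunif h hh]
        exact Finset.card_pos.mpr ⟨x, hxh⟩
      have hcard : h'.card ≤ (insert z A).card := by
        rw [Finset.card_insert_of_notMem hzA, hAcard, hunif h' hh'H]
        omega
      exact Finset.mem_image.mpr ⟨z, hz.2, Finset.eq_of_subset_of_card_le hins hcard⟩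
    have hFeq : F = X.image (fun z => insert z A) := by
      apply Finset.eq_of_subset_of_card_le hFsub
      calc (X.image (fun z => insert z A)).card ≤ X.card := Finset.card_image_le
        _ = k := hXk
        _ ≤ F.card := hkF
    have hyF : insert y A ∈ F := by
      rw [hFeq]; exact Finset.mem_image.mpr ⟨y, hy, rfl⟩
    rw [hF, Finset.mem_filter] at hyF
    refine ⟨hyF.1, ?_⟩
    apply Finset.Subset.antisymm
    · intro c hc
      rw [Finset.mem_inter, Finset.mem_insert] at hc
      rcases hc.1 with rfl | hcA
      · exact Finset.mem_singleton_self c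
      · exact absurd (Finset.mem_inter.mpr ⟨hcA, hc.2⟩) (by simp [hAX])
    · intro c hc
      rw [Finset.mem_singleton] at hc
      subst hc
      exact Finset.mem_inter.mpr ⟨Finset.mem_insert_self _ _, hy⟩
  have hsubs : ∀ x ∈ X, ∀ y ∈ X,
      ((H.filter fun h => h ∩ X = {x}).image fun h => h.erase x) ⊆
      ((H.filter fun h => h ∩ X = {y}).image fun h => h.erase y) := by
    intro x hx y hy A hA
    obtain ⟨h, hh, rfl⟩ := Finset.mem_image.mp hA
    rw [Finset.mem_filter] at hh
    obtain ⟨hkey1, hkey2⟩ := key x hx h hh.1 hh.2 y hy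
    apply Finset.mem_image.mpr
    refine ⟨insert y (h.erase x), Finset.mem_filter.mpr ⟨hkey1, hkey2⟩, ?_⟩
    have hyA : y ∉ h.erase x := by
      intro hyA
      have : y ∈ (h.erase x) ∩ X := Finset.mem_inter.mpr ⟨hyA, hy⟩
      simp [hdisj x h hh.2] at this
    exact Finset.erase_insert hyA
  refine ⟨fun x hx y hy => Finset.Subset.antisymm (hsubs x hx y hy) (hsubs y hy x hx), ?_⟩
  intro x hx
  constructor
  · intro A hA
    obtain ⟨h, hh, rfl⟩ := Finset.mem_image.mp hA
    rw [Finset.mem_filter] at hh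
    rw [Finset.card_erase_of_mem (hmemx x h hh.2), hunif h hh.1]
  · intro A hA B hB
    obtain ⟨hA', hhA, rfl⟩ := Finset.mem_image.mp hA
    obtain ⟨hB', hhB, rfl⟩ := Finset.mem_image.mp hB
    rw [Finset.mem_filter] at hhA hhB
    obtain ⟨y, hy, hyx⟩ := Finset.exists_mem_ne (by omega : 1 < X.card) x
    obtain ⟨h2mem, _⟩ := key x hx hB' hhB.1 hhB.2 y hy
    obtain ⟨c, hc⟩ := hint _ hhA.1 _ h2mem
    rw [Finset.mem_inter, Finset.mem_insert] at hc
    obtain ⟨hcA, hcB⟩ := hc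
    rcases hcB with rfl | hcB
    · -- c = y : impossible since y ∈ X, y ≠ x, but hA' ∩ X = {x}
      exfalso
      have : c ∈ hA' ∩ X := Finset.mem_inter.mpr ⟨hcA, hy⟩
      rw [hhA.2, Finset.mem_singleton] at this
      exact hyx this
    · have hcx : c ≠ x := Finset.ne_of_mem_erase hcB
      exact ⟨c, Finset.mem_inter.mpr ⟨Finset.mem_erase.mpr ⟨hcx, hcA⟩, hcB⟩⟩
end

section
/- Fix integers r ≥ 3, k ≥ 1, p ≥ 1, and let f(r,p) denote the minimum integer such that every r-uniform hypergraph with f(r,p) hyperedges contains a sunflower with p petals. For n sufficiently large, every r-uniform n-vertex hypergraph G with at least 2·r^{r-k}·f(r, p·r^{r-k})·C(n-k-1, r-k-1) hyperedges contains a sunflower with p petals whose core has size at most k. -/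
/-- A family of r-subsets of ℕ contains a sunflower with q petals. -/
def HasSunflower (F : Finset (Finset ℕ)) (q : ℕ) : Prop :=
  ∃ S ⊆ F, S.card = q ∧ ∃ Y : Finset ℕ, ∀ a ∈ S, ∀ b ∈ S, a ≠ b → a ∩ b = Y

/-- Counting: at most `(n-t).choose (r-t)` many `r`-subsets of `Fin n` contain a fixed
`t`-set `T`. -/
lemma count_superset {n r t : ℕ} (T : Finset (Fin n)) (hT : T.card = t)
    (A : Finset (Finset (Fin n))) (hA : ∀ e ∈ A, e.card = r ∧ T ⊆ e) :
    A.card ≤ (n - t).choose (r - t) := by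
  classical
  have hmem : ∀ e ∈ A, e \ T ∈ Finset.powersetCard (r - t) (Finset.univ \ T) := by
    intro e he
    obtain ⟨hcard, hTe⟩ := hA e he
    rw [Finset.mem_powersetCard]
    constructor
    · exact Finset.sdiff_subset_sdiff (Finset.subset_univ _) le_rfl
    · rw [Finset.card_sdiff_of_subset hTe, hcard, hT]
  have hinj : Set.InjOn (fun e => e \ T) A := by
    intro a ha b hb hab
    have ha' := (hA a ha).2
    have hb' := (hA b hb).2
    have := congrArg (fun s => s ∪ T) hab
    simpa [Finset.sdiff_union_of_subset ha', Finset.sdiff_union_of_subset hb'] using this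
  have := Finset.card_le_card_of_injOn (fun e => e \ T) hmem hinj
  rwa [Finset.card_powersetCard, Finset.card_sdiff_of_subset (Finset.subset_univ _),
    Finset.card_univ, Fintype.card_fin, hT] at this

/-- At most `r.choose (k+1) * (n-(k+1)).choose (r-(k+1))` many `r`-sets intersect a
fixed `r`-set `h` in at least `k+1` elements. -/
lemma count_big_inter {n r k : ℕ} (h : Finset (Fin n)) (hh : h.card = r)
    (A : Finset (Finset (Fin n))) (hA : ∀ e ∈ A, e.card = r) :
    (A.filter (fun e => k + 1 ≤ (e ∩ h).card)).card ≤
      r.choose (k + 1) * (n - (k + 1)).choose (r - (k + 1)) := by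
  classical
  set B := A.filter (fun e => k + 1 ≤ (e ∩ h).card) with hB
  have hsub : B ⊆ (Finset.powersetCard (k + 1) h).biUnion
      (fun T => B.filter (fun e => T ⊆ e)) := by
    intro e he
    have he' := Finset.mem_filter.mp he
    obtain ⟨T, hTsub, hTcard⟩ := Finset.exists_subset_card_eq he'.2
    refine Finset.mem_biUnion.mpr ⟨T, ?_, ?_⟩
    · exact Finset.mem_powersetCard.mpr ⟨hTsub.trans Finset.inter_subset_right, hTcard⟩
    · exact Finset.mem_filter.mpr ⟨he, hTsub.trans Finset.inter_subset_left⟩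
  calc B.card ≤ ((Finset.powersetCard (k + 1) h).biUnion
        (fun T => B.filter (fun e => T ⊆ e))).card := Finset.card_le_card hsub
    _ ≤ ∑ T ∈ Finset.powersetCard (k + 1) h, (B.filter (fun e => T ⊆ e)).card :=
        Finset.card_biUnion_le
    _ ≤ ∑ _T ∈ Finset.powersetCard (k + 1) h, (n - (k + 1)).choose (r - (k + 1)) := by
        refine Finset.sum_le_sum ?_
        intro T hT
        have hTcard := (Finset.mem_powersetCard.mp hT).2
        refine count_superset T hTcard _ ?_
        intro e he
        have he' := Finset.mem_filter.mp he
        have he'' := Finset.mem_filter.mp he'.1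
        exact ⟨hA e he''.1, he'.2⟩
    _ = (Finset.powersetCard (k + 1) h).card * (n - (k + 1)).choose (r - (k + 1)) := by
        rw [Finset.sum_const, smul_eq_mul]
    _ = r.choose (k + 1) * (n - (k + 1)).choose (r - (k + 1)) := by
        rw [Finset.card_powersetCard, hh]

/-- Greedy extraction of a subfamily with pairwise small intersections. -/
lemma greedy {n r k : ℕ} (hkr : k + 1 ≤ r) :
    ∀ N (A : Finset (Finset (Fin n))), A.card ≤ N → (∀ e ∈ A, e.card = r) →
    ∃ H, H ⊆ A ∧ (∀ a ∈ H, ∀ b ∈ H, a ≠ b → (a ∩ b).card ≤ k) ∧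
      A.card ≤ H.card * (r.choose (k + 1) * (n - (k + 1)).choose (r - (k + 1))) := by
  classical
  intro N
  induction N with
  | zero =>
    intro A hA _
    refine ⟨∅, Finset.empty_subset _, by simp, ?_⟩
    simp [Nat.le_zero.mp hA]
  | succ N ih =>
    intro A hA hcards
    rcases A.eq_empty_or_nonempty with rfl | ⟨h, hhA⟩
    · exact ⟨∅, Finset.empty_subset _, by simp, by simp⟩
    set B := A.filter (fun e => k + 1 ≤ (e ∩ h).card) with hBdef
    have hhB : h ∈ B := by
      refine Finset.mem_filter.mpr ⟨hhA, ?_⟩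
      rw [Finset.inter_self, hcards h hhA]; exact hkr
    have hBsub : B ⊆ A := Finset.filter_subset _ _
    have hA'card : (A \ B).card ≤ N := by
      have h1 : (A \ B).card < A.card := by
        apply Finset.card_lt_card
        refine ⟨Finset.sdiff_subset, fun hc => ?_⟩
        exact (Finset.mem_sdiff.mp (hc hhA)).2 hhB
      omega
    obtain ⟨H', hH'sub, hH'pair, hH'count⟩ := ih (A \ B) hA'card
      (fun e he => hcards e (Finset.mem_sdiff.mp he).1)
    have hhH' : h ∉ H' := fun hc => (Finset.mem_sdiff.mp (hH'sub hc)).2 hhB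
    refine ⟨insert h H', ?_, ?_, ?_⟩
    · intro x hx
      rcases Finset.mem_insert.mp hx with rfl | hx
      · exact hhA
      · exact (Finset.mem_sdiff.mp (hH'sub hx)).1
    · have small : ∀ x ∈ H', (x ∩ h).card ≤ k := by
        intro x hx
        have hxB : x ∉ B := (Finset.mem_sdiff.mp (hH'sub hx)).2
        have : ¬ (k + 1 ≤ (x ∩ h).card) := fun hc =>
          hxB (Finset.mem_filter.mpr ⟨(Finset.mem_sdiff.mp (hH'sub hx)).1, hc⟩)
        omega
      intro a ha b hb hab
      rcases Finset.mem_insert.mp ha with ha' | ha'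
      · rcases Finset.mem_insert.mp hb with hb' | hb'
        · exact absurd (ha'.trans hb'.symm) hab
        · rw [ha', Finset.inter_comm]; exact small b hb'
      · rcases Finset.mem_insert.mp hb with hb' | hb'
        · rw [hb']; exact small a ha'
        · exact hH'pair a ha' b hb' hab
    · have hBbound : B.card ≤ r.choose (k + 1) * (n - (k + 1)).choose (r - (k + 1)) :=
        count_big_inter h (hcards h hhA) A hcards
      have hsplit : (A \ B).card + B.card = A.card :=
        Finset.card_sdiff_add_card_eq_card hBsub
      rw [Finset.card_insert_of_notMem hhH']
      calc A.card = (A \ B).card + B.card := hsplit.symm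
        _ ≤ H'.card * (r.choose (k + 1) * (n - (k + 1)).choose (r - (k + 1))) +
            r.choose (k + 1) * (n - (k + 1)).choose (r - (k + 1)) :=
          Nat.add_le_add hH'count hBbound
        _ = (H'.card + 1) * (r.choose (k + 1) * (n - (k + 1)).choose (r - (k + 1))) := by
          ring

/-- With f(r,·) the sunflower function, for n large every r-uniform n-vertex hypergraph
with at least 2·r^{r-k}·f(r, p·r^{r-k})·C(n-k-1, r-k-1) hyperedges contains a sunflower
with p petals and core of size at most k. -/
theorem stmt_18 (r k p : ℕ) (hr : 3 ≤ r) (hk : 1 ≤ k) (hp : 1 ≤ p)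
    (f : ℕ → ℕ → ℕ)
    (hf1 : ∀ q : ℕ, ∀ F : Finset (Finset ℕ), (∀ h ∈ F, h.card = r) →
      f r q ≤ F.card → HasSunflower F q)
    (hf2 : ∀ q m : ℕ,
      (∀ F : Finset (Finset ℕ), (∀ h ∈ F, h.card = r) → m ≤ F.card → HasSunflower F q) →
      f r q ≤ m) :
    ∃ n₀ : ℕ, ∀ n, n₀ ≤ n → ∀ G : Finset (Finset (Fin n)),
      (∀ h ∈ G, h.card = r) →
      2 * r ^ (r - k) * f r (p * r ^ (r - k)) * (n - (k + 1)).choose (r - (k + 1)) ≤ G.card →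
      ∃ S ⊆ G, S.card = p ∧ ∃ Y : Finset (Fin n), Y.card ≤ k ∧
        ∀ a ∈ S, ∀ b ∈ S, a ≠ b → a ∩ b = Y := by
  classical
  refine ⟨r, fun n hn G hGcards hGcard => ?_⟩
  set q := p * r ^ (r - k) with hq
  -- Step 1: extract H ⊆ G with pairwise intersections of size ≤ k and f r q ≤ H.card
  have key : ∃ H, H ⊆ G ∧ (∀ a ∈ H, ∀ b ∈ H, a ≠ b → (a ∩ b).card ≤ k) ∧
      f r q ≤ H.card := by
    by_cases hkr : k + 1 ≤ r
    · obtain ⟨H, hHG, hHpair, hHcount⟩ := greedy hkr G.card G le_rfl hGcards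
      refine ⟨H, hHG, hHpair, ?_⟩
      have hCpos : 0 < (n - (k + 1)).choose (r - (k + 1)) :=
        Nat.choose_pos (Nat.sub_le_sub_right hn _)
      have hchoose : r.choose (k + 1) ≤ r ^ (r - k) := by
        calc r.choose (k + 1) = r.choose (r - (k + 1)) := (Nat.choose_symm hkr).symm
          _ ≤ r ^ (r - (k + 1)) := Nat.choose_le_pow _ _
          _ ≤ r ^ (r - k) := Nat.pow_le_pow_right (by omega) (by omega)
      have h1 : 2 * r ^ (r - k) * f r q * (n - (k + 1)).choose (r - (k + 1)) ≤
          H.card * (r ^ (r - k) * (n - (k + 1)).choose (r - (k + 1))) := by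
        calc 2 * r ^ (r - k) * f r q * (n - (k + 1)).choose (r - (k + 1)) ≤ G.card :=
            hGcard
          _ ≤ H.card * (r.choose (k + 1) * (n - (k + 1)).choose (r - (k + 1))) := hHcount
          _ ≤ H.card * (r ^ (r - k) * (n - (k + 1)).choose (r - (k + 1))) := by
            exact Nat.mul_le_mul_left _ (Nat.mul_le_mul_right _ hchoose)
      have h2 : (2 * f r q) * (r ^ (r - k) * (n - (k + 1)).choose (r - (k + 1))) ≤
          H.card * (r ^ (r - k) * (n - (k + 1)).choose (r - (k + 1))) := by
        calc (2 * f r q) * (r ^ (r - k) * (n - (k + 1)).choose (r - (k + 1)))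
            = 2 * r ^ (r - k) * f r q * (n - (k + 1)).choose (r - (k + 1)) := by ring
          _ ≤ _ := h1
      have hpos : 0 < r ^ (r - k) * (n - (k + 1)).choose (r - (k + 1)) :=
        Nat.mul_pos (Nat.pow_pos (by omega)) hCpos
      have := Nat.le_of_mul_le_mul_right h2 hpos
      omega
    · -- r ≤ k : any two distinct r-sets intersect in ≤ r - 1 ≤ k elements
      push_neg at hkr
      refine ⟨G, le_refl _, ?_, ?_⟩
      · intro a ha b hb hab
        have h1 : (a ∩ b).card ≤ r := by
          rw [← hGcards a ha]
          exact Finset.card_le_card Finset.inter_subset_left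
        have h2 : (a ∩ b).card ≠ r := by
          intro hc
          have : a ∩ b = a := Finset.eq_of_subset_of_card_le Finset.inter_subset_left
            (by rw [hGcards a ha, hc])
          have hab' : a ⊆ b := by rw [← this]; exact Finset.inter_subset_right
          exact hab (Finset.eq_of_subset_of_card_le hab'
            (by rw [hGcards a ha, hGcards b hb]))
        omega
      · have hrk : r - k = 0 := by omega
        have hrk1 : r - (k + 1) = 0 := by omega
        rw [hrk, hrk1] at hGcard
        simp only [pow_zero, mul_one, Nat.choose_zero_right] at hGcard
        omega
  obtain ⟨H, hHG, hHpair, hHcard⟩ := key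
  -- Step 2: transport to ℕ and apply hf1
  set e : Fin n ↪ ℕ := ⟨Fin.val, Fin.val_injective⟩ with he
  set mE : Finset (Fin n) ↪ Finset ℕ := ⟨Finset.map e, Finset.map_injective e⟩ with hmE
  set F : Finset (Finset ℕ) := H.map mE with hF
  have hFcards : ∀ h ∈ F, h.card = r := by
    intro s hs
    obtain ⟨h, hh, rfl⟩ := Finset.mem_map.mp hs
    simp only [hmE, Function.Embedding.coeFn_mk, Finset.card_map]
    exact hGcards h (hHG hh)
  have hFcard : f r q ≤ F.card := by rwa [hF, Finset.card_map]
  obtain ⟨S, hSF, hScard, Y, hY⟩ := hf1 q F hFcards hFcard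
  -- pull back
  set S₀ : Finset (Finset (Fin n)) := H.filter (fun h => mE h ∈ S) with hS₀
  have hS₀map : S₀.map mE = S := by
    apply Finset.ext
    intro s
    constructor
    · intro hs
      obtain ⟨h, hh, rfl⟩ := Finset.mem_map.mp hs
      exact (Finset.mem_filter.mp hh).2
    · intro hs
      obtain ⟨h, hh, rfl⟩ := Finset.mem_map.mp (hSF hs)
      exact Finset.mem_map.mpr ⟨h, Finset.mem_filter.mpr ⟨hh, hs⟩, rfl⟩
  have hS₀card : S₀.card = q := by rw [← hScard, ← hS₀map, Finset.card_map]
  have hpq : p ≤ q := Nat.le_mul_of_pos_right p (Nat.pow_pos (by omega))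
  obtain ⟨S'', hS''sub, hS''card⟩ := Finset.exists_subset_card_eq (by omega :
    p ≤ S₀.card)
  have hS''H : ∀ a ∈ S'', a ∈ H := fun a ha => (Finset.mem_filter.mp (hS''sub ha)).1
  have hS''G : S'' ⊆ G := fun a ha => hHG (hS''H a ha)
  have hkey : ∀ a ∈ S'', ∀ b ∈ S'', a ≠ b → Finset.map e (a ∩ b) = Y := by
    intro a ha b hb hab
    have haS : mE a ∈ S := (Finset.mem_filter.mp (hS''sub ha)).2
    have hbS : mE b ∈ S := (Finset.mem_filter.mp (hS''sub hb)).2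
    have hne : mE a ≠ mE b := fun hc => hab (mE.injective hc)
    have := hY (mE a) haS (mE b) hbS hne
    simp only [hmE, Function.Embedding.coeFn_mk] at this
    rwa [← Finset.map_inter] at this
  by_cases hp2 : 2 ≤ p
  · obtain ⟨a₀, ha₀, b₀, hb₀, hab₀⟩ := Finset.one_lt_card.mp (by omega : 1 < S''.card)
    refine ⟨S'', hS''G, hS''card, a₀ ∩ b₀, ?_, ?_⟩
    · exact hHpair a₀ (hS''H a₀ ha₀) b₀ (hS''H b₀ hb₀) hab₀
    · intro a ha b hb hab
      apply Finset.map_injective e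
      rw [hkey a ha b hb hab, hkey a₀ ha₀ b₀ hb₀ hab₀]
  · have hp1 : p = 1 := by omega
    refine ⟨S'', hS''G, hS''card, ∅, by simp, ?_⟩
    intro a ha b hb hab
    rw [hp1] at hS''card
    obtain ⟨x, rfl⟩ := Finset.card_eq_one.mp hS''card
    rw [Finset.mem_singleton.mp ha, Finset.mem_singleton.mp hb] at hab
    exact absurd rfl hab
end
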